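/- arXiv:1911.11584 — 2 statements merged into one kernel-verified Lean document; each statement's English description precedes it below -/
import Mathlib

section
/- For every partial isomorphism h between property graphs G1 and G2, the canonical edit script induced by h — which deletes all properties on unmatched objects of G1 and all properties of matched objects having no equal counterpart under h, deletes all unmatched edges and then all unmatched nodes of G1, updates each matched property whose values differ, then inserts all unmatched nodes of G2, all unmatched edges of G2, and all properties of G2 not already accounted for — is a valid edit script whose length is exactly cost(h) and which maps G1 to a graph isomorphic to G2. Consequently GED(G1,G2) ≤ cost(h). -/
/-!
Property graphs, homomorphisms/isomorphisms/subgraphs, edit operations,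
edit scripts, canonical scripts, graph edit distance, partial isomorphisms
and their cost, and the edit-script rewriting system of the paper
"Flexible graph matching and graph edit distance using answer set programming".
-/

universe u v w z

variable {ι : Type u} {L : Type v} {K : Type w} {D : Type z}

/-- A raw property-graph structure: finite sets of node and edge identifiers,
partial source/target/label functions (modelled via `Option`), and a partial
key-value property assignment. -/
structure PreGraph (ι : Type u) (L : Type v) (K : Type w) (D : Type z) where
  V : Finset ι
  E : Finset ι
  src : ι → Option ι
  tgt : ι → Option ι
  lab : ι → Option L
  prop : ι → K → Option D

section Graphs

variable [DecidableEq ι]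

/-- The invariants making a raw structure an actual property graph:
nodes and edges are disjoint, sources and targets are defined exactly on
edges and map into the node set, labels are defined exactly on nodes and
edges, and properties are defined only on nodes and edges. -/
structure IsPGraph (G : PreGraph ι L K D) : Prop where
  disj : Disjoint G.V G.E
  src_dom : ∀ e, (G.src e).isSome ↔ e ∈ G.E
  tgt_dom : ∀ e, (G.tgt e).isSome ↔ e ∈ G.E
  src_mem : ∀ e v, G.src e = some v → v ∈ G.V
  tgt_mem : ∀ e v, G.tgt e = some v → v ∈ G.V
  lab_dom : ∀ x, (G.lab x).isSome ↔ x ∈ G.V ∪ G.E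
  prop_dom : ∀ x k, (G.prop x k).isSome → x ∈ G.V ∪ G.E

/-- A homomorphism of property graphs (represented by a total function on
identifiers): maps nodes to nodes and edges to edges preserving labels,
sources, targets, and all defined properties. -/
structure IsHom (G1 G2 : PreGraph ι L K D) (h : ι → ι) : Prop where
  map_V : ∀ v ∈ G1.V, h v ∈ G2.V
  map_E : ∀ e ∈ G1.E, h e ∈ G2.E
  lab_eq : ∀ x ∈ G1.V ∪ G1.E, G2.lab (h x) = G1.lab x
  src_eq : ∀ e ∈ G1.E, ∀ v, G1.src e = some v → G2.src (h e) = some (h v)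
  tgt_eq : ∀ e ∈ G1.E, ∀ v, G1.tgt e = some v → G2.tgt (h e) = some (h v)
  prop_eq : ∀ x ∈ G1.V ∪ G1.E, ∀ k d, G1.prop x k = some d → G2.prop (h x) k = some d

/-- An isomorphism of property graphs: an invertible homomorphism whose
inverse is also a homomorphism. -/
def IsIso (G1 G2 : PreGraph ι L K D) (h : ι → ι) : Prop :=
  IsHom G1 G2 h ∧ ∃ g : ι → ι, IsHom G2 G1 g ∧
    (∀ x ∈ G1.V ∪ G1.E, g (h x) = x) ∧ (∀ y ∈ G2.V ∪ G2.E, h (g y) = y)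

/-- `G'` is a subgraph of `G`: `G'` is itself a property graph, its nodes and
edges are among those of `G`, and sources, targets, labels and defined
properties agree with those of `G`. -/
def IsSubgraph (G' G : PreGraph ι L K D) : Prop :=
  IsPGraph G' ∧ G'.V ⊆ G.V ∧ G'.E ⊆ G.E ∧
  (∀ e ∈ G'.E, G'.src e = G.src e ∧ G'.tgt e = G.tgt e) ∧
  (∀ x ∈ G'.V ∪ G'.E, G'.lab x = G.lab x) ∧
  (∀ x k d, G'.prop x k = some d → G.prop x k = some d)

end Graphs

/-- The seven edit operations on property graphs. -/
inductive EditOp (ι : Type u) (L : Type v) (K : Type w) (D : Type z) where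
  | insV (v : ι) (l : L)
  | insE (e v w : ι) (l : L)
  | insP (x : ι) (k : K) (d : D)
  | delV (v : ι)
  | delE (e : ι)
  | delP (x : ι) (k : K)
  | updP (x : ι) (k : K) (d : D)

section Edits

variable [DecidableEq ι] [DecidableEq K]

/-- The precondition of an edit operation on a graph. -/
def Applicable (op : EditOp ι L K D) (G : PreGraph ι L K D) : Prop :=
  match op with
  | .insV v _ => v ∉ G.V ∪ G.E
  | .insE e v w _ => v ∈ G.V ∧ w ∈ G.V ∧ e ∉ G.V ∪ G.E
  | .insP x k _ => x ∈ G.V ∪ G.E ∧ G.prop x k = none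
  | .delV v => v ∈ G.V ∧ (∀ e ∈ G.E, G.src e ≠ some v ∧ G.tgt e ≠ some v) ∧
      (∀ k, G.prop v k = none)
  | .delE e => e ∈ G.E ∧ (∀ k, G.prop e k = none)
  | .delP x k => (G.prop x k).isSome
  | .updP x k _ => (G.prop x k).isSome

/-- The effect of an edit operation on a graph. -/
def applyOp (op : EditOp ι L K D) (G : PreGraph ι L K D) : PreGraph ι L K D :=
  match op with
  | .insV v l =>
      { G with
        V := (insert v G.V)
        lab := fun x => if x = v then some l else G.lab x }
  | .insE e v w l =>
      { G with
        E := (insert e G.E)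
        src := fun x => if x = e then some v else G.src x
        tgt := fun x => if x = e then some w else G.tgt x
        lab := fun x => if x = e then some l else G.lab x }
  | .insP x k d =>
      { G with prop := fun y k' => if y = x ∧ k' = k then some d else G.prop y k' }
  | .delV v =>
      { G with
        V := (G.V.erase v)
        lab := fun x => if x = v then none else G.lab x }
  | .delE e =>
      { G with
        E := (G.E.erase e)
        src := fun x => if x = e then none else G.src x
        tgt := fun x => if x = e then none else G.tgt x
        lab := fun x => if x = e then none else G.lab x }
  | .delP x k =>
      { G with prop := fun y k' => if y = x ∧ k' = k then none else G.prop y k' }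
  | .updP x k d =>
      { G with prop := fun y k' => if y = x ∧ k' = k then some d else G.prop y k' }

/-- An edit script is valid on `G` if each operation is applicable in the
graph produced by the preceding ones. -/
inductive ValidScript : PreGraph ι L K D → List (EditOp ι L K D) → Prop where
  | nil (G : PreGraph ι L K D) : ValidScript G []
  | cons {G : PreGraph ι L K D} {op : EditOp ι L K D} {ops : List (EditOp ι L K D)} :
      Applicable op G → ValidScript (applyOp op G) ops → ValidScript G (op :: ops)

/-- The result `ops(G)` of applying an edit script in order. -/
def applyScript (ops : List (EditOp ι L K D)) (G : PreGraph ι L K D) : PreGraph ι L K D :=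
  ops.foldl (fun g op => applyOp op g) G

/-- A canonical edit script: property deletions, then edge deletions, then
node deletions, then property updates, then node insertions, then edge
insertions, then property insertions. -/
def Canonical (ops : List (EditOp ι L K D)) : Prop :=
  ∃ dp de dv up iv ie ip : List (EditOp ι L K D),
    ops = dp ++ de ++ dv ++ up ++ iv ++ ie ++ ip ∧
    (∀ op ∈ dp, ∃ x k, op = EditOp.delP x k) ∧
    (∀ op ∈ de, ∃ e, op = EditOp.delE e) ∧
    (∀ op ∈ dv, ∃ v, op = EditOp.delV v) ∧
    (∀ op ∈ up, ∃ x k d, op = EditOp.updP x k d) ∧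
    (∀ op ∈ iv, ∃ v l, op = EditOp.insV v l) ∧
    (∀ op ∈ ie, ∃ e v w l, op = EditOp.insE e v w l) ∧
    (∀ op ∈ ip, ∃ x k d, op = EditOp.insP x k d)

/-- The set of lengths of valid edit scripts transforming `G1` into a graph
isomorphic to `G2`. -/
def GEDSet (G1 G2 : PreGraph ι L K D) : Set ℕ :=
  {n | ∃ ops : List (EditOp ι L K D), ValidScript G1 ops ∧
        (∃ f : ι → ι, IsIso (applyScript ops G1) G2 f) ∧ ops.length = n}

/-- The graph edit distance: the minimum length of a valid edit script
transforming `G1` into a graph isomorphic to `G2`. -/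
noncomputable def GED (G1 G2 : PreGraph ι L K D) : ℕ :=
  sInf (GEDSet G1 G2)

/-- The number of defined properties of a graph. -/
def propCount [Fintype K] (G : PreGraph ι L K D) : ℕ :=
  ∑ x ∈ G.V ∪ G.E, (Finset.univ.filter fun k : K => (G.prop x k).isSome).card

end Edits

/-- A possibly-marked edit operation: the boolean records whether the
operation is marked (`op*`). -/
abbrev MOp (ι : Type u) (L : Type v) (K : Type w) (D : Type z) :=
  EditOp ι L K D × Bool

/-- The edit-script rewrite rules of Figure 5 of the paper, acting on the
marked operation and the operation immediately following it. -/
inductive RewStep : List (MOp ι L K D) → List (MOp ι L K D) → Prop where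
  | delE_delP (e x : ι) (k : K) :
      RewStep [(.delE e, true), (.delP x k, false)] [(.delP x k, false), (.delE e, true)]
  | delV_delP (v x : ι) (k : K) :
      RewStep [(.delV v, true), (.delP x k, false)] [(.delP x k, false), (.delV v, true)]
  | delV_delE (v e : ι) :
      RewStep [(.delV v, true), (.delE e, false)] [(.delE e, false), (.delV v, true)]
  | updP_delP_same (x : ι) (k : K) (d : D) :
      RewStep [(.updP x k d, true), (.delP x k, false)] [(.delP x k, false)]
  | updP_delP_ne (x y : ι) (k k' : K) (d : D) (h : ¬(x = y ∧ k = k')) :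
      RewStep [(.updP x k d, true), (.delP y k', false)]
        [(.delP y k', false), (.updP x k d, true)]
  | updP_delE (x : ι) (k : K) (d : D) (e : ι) :
      RewStep [(.updP x k d, true), (.delE e, false)] [(.delE e, false), (.updP x k d, true)]
  | updP_delV (x : ι) (k : K) (d : D) (v : ι) :
      RewStep [(.updP x k d, true), (.delV v, false)] [(.delV v, false), (.updP x k d, true)]
  | insV_delP (v : ι) (l : L) (x : ι) (k : K) :
      RewStep [(.insV v l, true), (.delP x k, false)] [(.delP x k, false), (.insV v l, true)]
  | insV_delE (v : ι) (l : L) (e : ι) :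
      RewStep [(.insV v l, true), (.delE e, false)] [(.delE e, false), (.insV v l, true)]
  | insV_delV_same (v : ι) (l : L) :
      RewStep [(.insV v l, true), (.delV v, false)] []
  | insV_delV_ne (v : ι) (l : L) (v' : ι) (h : v ≠ v') :
      RewStep [(.insV v l, true), (.delV v', false)] [(.delV v', false), (.insV v l, true)]
  | insV_updP (v : ι) (l : L) (x : ι) (k : K) (d : D) :
      RewStep [(.insV v l, true), (.updP x k d, false)]
        [(.updP x k d, false), (.insV v l, true)]
  | insE_delP (e v w : ι) (l : L) (x : ι) (k : K) :
      RewStep [(.insE e v w l, true), (.delP x k, false)]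
        [(.delP x k, false), (.insE e v w l, true)]
  | insE_delE_same (e v w : ι) (l : L) :
      RewStep [(.insE e v w l, true), (.delE e, false)] []
  | insE_delE_ne (e v w : ι) (l : L) (e' : ι) (h : e ≠ e') :
      RewStep [(.insE e v w l, true), (.delE e', false)]
        [(.delE e', false), (.insE e v w l, true)]
  | insE_delV (e v w : ι) (l : L) (v' : ι) :
      RewStep [(.insE e v w l, true), (.delV v', false)]
        [(.delV v', false), (.insE e v w l, true)]
  | insE_updP (e v w : ι) (l : L) (x : ι) (k : K) (d : D) :
      RewStep [(.insE e v w l, true), (.updP x k d, false)]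
        [(.updP x k d, false), (.insE e v w l, true)]
  | insE_insV (e v w : ι) (l : L) (v' : ι) (l' : L) :
      RewStep [(.insE e v w l, true), (.insV v' l', false)]
        [(.insV v' l', false), (.insE e v w l, true)]
  | insP_delP_same (x : ι) (k : K) (d : D) :
      RewStep [(.insP x k d, true), (.delP x k, false)] []
  | insP_delP_ne (x y : ι) (k k' : K) (d : D) (h : ¬(x = y ∧ k = k')) :
      RewStep [(.insP x k d, true), (.delP y k', false)]
        [(.delP y k', false), (.insP x k d, true)]
  | insP_delE (x : ι) (k : K) (d : D) (e : ι) :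
      RewStep [(.insP x k d, true), (.delE e, false)] [(.delE e, false), (.insP x k d, true)]
  | insP_delV (x : ι) (k : K) (d : D) (v : ι) :
      RewStep [(.insP x k d, true), (.delV v, false)] [(.delV v, false), (.insP x k d, true)]
  | insP_updP_same (x : ι) (k : K) (d d' : D) :
      RewStep [(.insP x k d, true), (.updP x k d', false)] [(.insP x k d', true)]
  | insP_updP_ne (x y : ι) (k k' : K) (d d' : D) (h : ¬(x = y ∧ k = k')) :
      RewStep [(.insP x k d, true), (.updP y k' d', false)]
        [(.updP y k' d', false), (.insP x k d, true)]
  | insP_insV (x : ι) (k : K) (d : D) (v : ι) (l : L) :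
      RewStep [(.insP x k d, true), (.insV v l, false)] [(.insV v l, false), (.insP x k d, true)]
  | insP_insE (x : ι) (k : K) (d : D) (e v w : ι) (l : L) :
      RewStep [(.insP x k d, true), (.insE e v w l, false)]
        [(.insE e v w l, false), (.insP x k d, true)]
  | unmark (op : EditOp ι L K D) :
      RewStep [(op, true)] [(op, false)]

/-- One rewrite step on a marked edit script: apply one of the rules at the
position of the marked operation (everything before it is unmarked). -/
def Rew (m m' : List (MOp ι L K D)) : Prop :=
  ∃ pre a b post : List (MOp ι L K D),
    (∀ p ∈ pre, p.2 = false) ∧ RewStep a b ∧ m = pre ++ a ++ post ∧ m' = pre ++ b ++ post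

/-- The `*`-length of a marked script: the length of the suffix beginning at
the (first) marked operation, or `0` if there is none. -/
def starLen : List (MOp ι L K D) → ℕ
  | [] => 0
  | (_, b) :: rest => if b then rest.length + 1 else starLen rest

section PartialIso

variable [DecidableEq ι]

/-- A partial isomorphism between two property graphs, represented as a
partial map on identifiers: injective, matching nodes to nodes and edges to
edges with equal labels, and matching the endpoints of matched edges. -/
def IsPartialIso (G1 G2 : PreGraph ι L K D) (h : ι → Option ι) : Prop :=
  (∀ x y, h x = some y → (x ∈ G1.V ∧ y ∈ G2.V) ∨ (x ∈ G1.E ∧ y ∈ G2.E)) ∧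
  (∀ x x' y, h x = some y → h x' = some y → x = x') ∧
  (∀ x y, h x = some y → G2.lab y = G1.lab x) ∧
  (∀ e e' v, h e = some e' → G1.src e = some v → h v = G2.src e') ∧
  (∀ e e' v, h e = some e' → G1.tgt e = some v → h v = G2.tgt e')

/-- The nodes and edges of `G1` left unmatched by `h`. -/
def unmatchedL (G1 : PreGraph ι L K D) (h : ι → Option ι) : Finset ι :=
  (G1.V ∪ G1.E).filter fun x => h x = none

/-- The nodes and edges of `G2` left unmatched by `h`. -/
def unmatchedR (G1 G2 : PreGraph ι L K D) (h : ι → Option ι) : Finset ι :=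
  (G2.V ∪ G2.E).filter fun y => ∀ x ∈ G1.V ∪ G1.E, h x ≠ some y

/-- The number of defined properties on a given object of a graph. -/
def propsOn [Fintype K] (G : PreGraph ι L K D) (x : ι) : ℕ :=
  (Finset.univ.filter fun k : K => (G.prop x k).isSome).card

/-- The number of keys at which the properties of a matched pair disagree
(defined with different values, or defined on only one side). -/
def mismatchCount [Fintype K] [DecidableEq D] (G1 G2 : PreGraph ι L K D) (x y : ι) : ℕ :=
  (Finset.univ.filter fun k : K => G1.prop x k ≠ G2.prop y k).card

/-- The cost of a partial isomorphism: unmatched nodes and edges on both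
sides, mismatched properties of matched pairs, and all properties on
unmatched objects of both sides. -/
def pisoCost [Fintype K] [DecidableEq D] (G1 G2 : PreGraph ι L K D) (h : ι → Option ι) : ℕ :=
  (unmatchedL G1 h).card + (unmatchedR G1 G2 h).card +
  (∑ x ∈ G1.V ∪ G1.E, (h x).elim 0 fun y => mismatchCount G1 G2 x y) +
  (∑ x ∈ unmatchedL G1 h, propsOn G1 x) +
  (∑ y ∈ unmatchedR G1 G2 h, propsOn G2 y)

end PartialIso

section BatchLemmas

variable [DecidableEq ι] [DecidableEq K]

lemma applyScript_append' (a b : List (EditOp ι L K D)) (G : PreGraph ι L K D) :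
    applyScript (a ++ b) G = applyScript b (applyScript a G) :=
  List.foldl_append

lemma validScript_append {G : PreGraph ι L K D} {a b : List (EditOp ι L K D)}
    (ha : ValidScript G a) (hb : ValidScript (applyScript a G) b) :
    ValidScript G (a ++ b) := by
  induction a generalizing G with
  | nil => exact hb
  | cons op t ih =>
      cases ha with
      | cons h0 ht => exact .cons h0 (ih ht hb)

lemma applyScript_cons (op : EditOp ι L K D) (ops : List (EditOp ι L K D)) (G : PreGraph ι L K D) :
    applyScript (op :: ops) G = applyScript ops (applyOp op G) := rfl

lemma filterMap_map_key {α β : Type*} (F : α → Option β) (key : β → α)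
    (hk : ∀ a b, F a = some b → key b = a) (l : List α) :
    (l.filterMap F).map key = l.filter (fun a => (F a).isSome) := by
  induction l with
  | nil => rfl
  | cons a t ih =>
      cases hFa : F a with
      | none => simp [List.filterMap_cons, hFa, ih, List.filter_cons]
      | some b => simp [List.filterMap_cons, hFa, ih, List.filter_cons, hk a b hFa]

lemma batch_delP (G : PreGraph ι L K D) (l : List (ι × K)) (hnd : l.Nodup)
    (hdef : ∀ p ∈ l, (G.prop p.1 p.2).isSome) :
    ValidScript G (l.map fun p => .delP p.1 p.2) ∧
    (applyScript (l.map fun p => .delP p.1 p.2) G).V = G.V ∧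
    (applyScript (l.map fun p => .delP p.1 p.2) G).E = G.E ∧
    (applyScript (l.map fun p => .delP p.1 p.2) G).src = G.src ∧
    (applyScript (l.map fun p => .delP p.1 p.2) G).tgt = G.tgt ∧
    (applyScript (l.map fun p => .delP p.1 p.2) G).lab = G.lab ∧
    (∀ p ∈ l, (applyScript (l.map fun p => .delP p.1 p.2) G).prop p.1 p.2 = none) ∧
    (∀ y k, (y, k) ∉ l → (applyScript (l.map fun p => .delP p.1 p.2) G).prop y k = G.prop y k) := by
  induction l generalizing G with
  | nil => exact ⟨.nil G, rfl, rfl, rfl, rfl, rfl, by simp, fun _ _ _ => rfl⟩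
  | cons p t ih =>
      obtain ⟨hp, hnd'⟩ := List.nodup_cons.mp hnd
      have happ : Applicable (EditOp.delP p.1 p.2) G := hdef p (List.mem_cons_self ..)
      have hdef' : ∀ q ∈ t, ((applyOp (EditOp.delP p.1 p.2) G).prop q.1 q.2).isSome := by
        intro q hq
        have hne : ¬(q.1 = p.1 ∧ q.2 = p.2) := by
          rintro ⟨h1, h2⟩
          exact hp (by rwa [show p = q from Prod.ext h1.symm h2.symm])
        show (if q.1 = p.1 ∧ q.2 = p.2 then none else G.prop q.1 q.2).isSome
        rw [if_neg hne]
        exact hdef q (List.mem_cons_of_mem _ hq)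
      obtain ⟨hvs, hV, hE, hs, ht', hl, hon, hoff⟩ :=
        ih (applyOp (EditOp.delP p.1 p.2) G) hnd' hdef'
      simp only [List.map_cons, applyScript_cons]
      refine ⟨.cons happ hvs, hV, hE, hs, ht', hl, ?_, ?_⟩
      · intro q hq
        rcases List.mem_cons.mp hq with rfl | hq'
        · have : (q.1, q.2) ∉ t := by simpa using hp
          rw [hoff q.1 q.2 this]
          show (if q.1 = q.1 ∧ q.2 = q.2 then none else G.prop q.1 q.2) = none
          simp
        · exact hon q hq'
      · intro y k hyk
        have h1 : (y, k) ∉ t := fun hc => hyk (List.mem_cons_of_mem _ hc)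
        have h2 : (y, k) ≠ p := fun hc => hyk (hc ▸ List.mem_cons_self ..)
        rw [hoff y k h1]
        show (if y = p.1 ∧ k = p.2 then none else G.prop y k) = G.prop y k
        rw [if_neg]
        rintro ⟨rfl, rfl⟩
        exact h2 (Prod.mk.eta)
end BatchLemmas
section BatchLemmas2

variable [DecidableEq ι] [DecidableEq K]

lemma batch_updP (G : PreGraph ι L K D) (l : List ((ι × K) × D))
    (hnd : (l.map Prod.fst).Nodup)
    (hdef : ∀ p ∈ l, (G.prop p.1.1 p.1.2).isSome) :
    ValidScript G (l.map fun p => .updP p.1.1 p.1.2 p.2) ∧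
    (applyScript (l.map fun p => .updP p.1.1 p.1.2 p.2) G).V = G.V ∧
    (applyScript (l.map fun p => .updP p.1.1 p.1.2 p.2) G).E = G.E ∧
    (applyScript (l.map fun p => .updP p.1.1 p.1.2 p.2) G).src = G.src ∧
    (applyScript (l.map fun p => .updP p.1.1 p.1.2 p.2) G).tgt = G.tgt ∧
    (applyScript (l.map fun p => .updP p.1.1 p.1.2 p.2) G).lab = G.lab ∧
    (∀ p ∈ l, (applyScript (l.map fun p => .updP p.1.1 p.1.2 p.2) G).prop p.1.1 p.1.2 = some p.2) ∧
    (∀ y k, (y, k) ∉ l.map Prod.fst →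
      (applyScript (l.map fun p => .updP p.1.1 p.1.2 p.2) G).prop y k = G.prop y k) := by
  induction l generalizing G with
  | nil => exact ⟨.nil G, rfl, rfl, rfl, rfl, rfl, by simp, fun _ _ _ => rfl⟩
  | cons p t ih =>
      rw [List.map_cons] at hnd
      obtain ⟨hp, hnd'⟩ := List.nodup_cons.mp hnd
      have happ : Applicable (EditOp.updP p.1.1 p.1.2 p.2) G := hdef p (List.mem_cons_self ..)
      have hdef' : ∀ q ∈ t, ((applyOp (EditOp.updP p.1.1 p.1.2 p.2) G).prop q.1.1 q.1.2).isSome := by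
        intro q hq
        show (if q.1.1 = p.1.1 ∧ q.1.2 = p.1.2 then some p.2 else G.prop q.1.1 q.1.2).isSome
        by_cases hc : q.1.1 = p.1.1 ∧ q.1.2 = p.1.2
        · rw [if_pos hc]; rfl
        · rw [if_neg hc]; exact hdef q (List.mem_cons_of_mem _ hq)
      obtain ⟨hvs, hV, hE, hs, ht', hl, hon, hoff⟩ :=
        ih (applyOp (EditOp.updP p.1.1 p.1.2 p.2) G) hnd' hdef'
      simp only [List.map_cons, applyScript_cons]
      refine ⟨.cons happ hvs, hV, hE, hs, ht', hl, ?_, ?_⟩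
      · intro q hq
        rcases List.mem_cons.mp hq with rfl | hq'
        · have : (q.1.1, q.1.2) ∉ t.map Prod.fst := by simpa using hp
          rw [hoff q.1.1 q.1.2 this]
          show (if q.1.1 = q.1.1 ∧ q.1.2 = q.1.2 then some q.2 else _) = some q.2
          simp
        · exact hon q hq'
      · intro y k hyk
        have h1 : (y, k) ∉ t.map Prod.fst := fun hc => hyk (List.mem_cons_of_mem _ hc)
        have h2 : (y, k) ≠ p.1 := fun hc => hyk (hc ▸ List.mem_cons_self ..)
        rw [hoff y k h1]
        show (if y = p.1.1 ∧ k = p.1.2 then some p.2 else G.prop y k) = G.prop y k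
        rw [if_neg]
        rintro ⟨rfl, rfl⟩
        exact h2 (Prod.mk.eta)

lemma batch_insP (G : PreGraph ι L K D) (l : List ((ι × K) × D))
    (hnd : (l.map Prod.fst).Nodup)
    (hdef : ∀ p ∈ l, p.1.1 ∈ G.V ∪ G.E ∧ G.prop p.1.1 p.1.2 = none) :
    ValidScript G (l.map fun p => .insP p.1.1 p.1.2 p.2) ∧
    (applyScript (l.map fun p => .insP p.1.1 p.1.2 p.2) G).V = G.V ∧
    (applyScript (l.map fun p => .insP p.1.1 p.1.2 p.2) G).E = G.E ∧
    (applyScript (l.map fun p => .insP p.1.1 p.1.2 p.2) G).src = G.src ∧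
    (applyScript (l.map fun p => .insP p.1.1 p.1.2 p.2) G).tgt = G.tgt ∧
    (applyScript (l.map fun p => .insP p.1.1 p.1.2 p.2) G).lab = G.lab ∧
    (∀ p ∈ l, (applyScript (l.map fun p => .insP p.1.1 p.1.2 p.2) G).prop p.1.1 p.1.2 = some p.2) ∧
    (∀ y k, (y, k) ∉ l.map Prod.fst →
      (applyScript (l.map fun p => .insP p.1.1 p.1.2 p.2) G).prop y k = G.prop y k) := by
  induction l generalizing G with
  | nil => exact ⟨.nil G, rfl, rfl, rfl, rfl, rfl, by simp, fun _ _ _ => rfl⟩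
  | cons p t ih =>
      rw [List.map_cons] at hnd
      obtain ⟨hp, hnd'⟩ := List.nodup_cons.mp hnd
      have happ : Applicable (EditOp.insP p.1.1 p.1.2 p.2) G := hdef p (List.mem_cons_self ..)
      have hdef' : ∀ q ∈ t, q.1.1 ∈ (applyOp (EditOp.insP p.1.1 p.1.2 p.2) G).V ∪
          (applyOp (EditOp.insP p.1.1 p.1.2 p.2) G).E ∧
          (applyOp (EditOp.insP p.1.1 p.1.2 p.2) G).prop q.1.1 q.1.2 = none := by
        intro q hq
        have hne : ¬(q.1.1 = p.1.1 ∧ q.1.2 = p.1.2) := by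
          rintro ⟨h1, h2⟩
          exact hp (by
            have : q.1 = p.1 := Prod.ext h1 h2
            exact this ▸ List.mem_map_of_mem (f := Prod.fst) hq)
        refine ⟨(hdef q (List.mem_cons_of_mem _ hq)).1, ?_⟩
        show (if q.1.1 = p.1.1 ∧ q.1.2 = p.1.2 then some p.2 else G.prop q.1.1 q.1.2) = none
        rw [if_neg hne]
        exact (hdef q (List.mem_cons_of_mem _ hq)).2
      obtain ⟨hvs, hV, hE, hs, ht', hl, hon, hoff⟩ :=
        ih (applyOp (EditOp.insP p.1.1 p.1.2 p.2) G) hnd' hdef'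
      simp only [List.map_cons, applyScript_cons]
      refine ⟨.cons happ hvs, hV, hE, hs, ht', hl, ?_, ?_⟩
      · intro q hq
        rcases List.mem_cons.mp hq with rfl | hq'
        · have : (q.1.1, q.1.2) ∉ t.map Prod.fst := by simpa using hp
          rw [hoff q.1.1 q.1.2 this]
          show (if q.1.1 = q.1.1 ∧ q.1.2 = q.1.2 then some q.2 else _) = some q.2
          simp
        · exact hon q hq'
      · intro y k hyk
        have h1 : (y, k) ∉ t.map Prod.fst := fun hc => hyk (List.mem_cons_of_mem _ hc)
        have h2 : (y, k) ≠ p.1 := fun hc => hyk (hc ▸ List.mem_cons_self ..)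
        rw [hoff y k h1]
        show (if y = p.1.1 ∧ k = p.1.2 then some p.2 else G.prop y k) = G.prop y k
        rw [if_neg]
        rintro ⟨rfl, rfl⟩
        exact h2 (Prod.mk.eta)

end BatchLemmas2
section BatchLemmas3

variable [DecidableEq ι] [DecidableEq K]

lemma batch_delE (G : PreGraph ι L K D) (l : List ι) (hnd : l.Nodup)
    (hmem : ∀ e ∈ l, e ∈ G.E) (hpr : ∀ e ∈ l, ∀ k, G.prop e k = none) :
    ValidScript G (l.map fun e => .delE e) ∧
    (applyScript (l.map fun e => .delE e) G).V = G.V ∧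
    (∀ x, x ∈ (applyScript (l.map fun e => .delE e) G).E ↔ x ∈ G.E ∧ x ∉ l) ∧
    (applyScript (l.map fun e => .delE e) G).prop = G.prop ∧
    (∀ x, x ∉ l → (applyScript (l.map fun e => .delE e) G).src x = G.src x ∧
      (applyScript (l.map fun e => .delE e) G).tgt x = G.tgt x ∧
      (applyScript (l.map fun e => .delE e) G).lab x = G.lab x) := by
  induction l generalizing G with
  | nil => exact ⟨.nil G, rfl, by simp [applyScript], rfl, fun _ _ => ⟨rfl, rfl, rfl⟩⟩
  | cons e t ih =>
      obtain ⟨hp, hnd'⟩ := List.nodup_cons.mp hnd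
      have happ : Applicable (EditOp.delE e) G :=
        ⟨hmem e (List.mem_cons_self ..), hpr e (List.mem_cons_self ..)⟩
      have hmem' : ∀ e' ∈ t, e' ∈ (applyOp (EditOp.delE e) G).E := by
        intro e' he'
        show e' ∈ G.E.erase e
        exact Finset.mem_erase.mpr ⟨fun hc => hp (hc ▸ he'), hmem e' (List.mem_cons_of_mem _ he')⟩
      have hpr' : ∀ e' ∈ t, ∀ k, (applyOp (EditOp.delE e) G).prop e' k = none :=
        fun e' he' k => hpr e' (List.mem_cons_of_mem _ he') k
      obtain ⟨hvs, hV, hE, hprop, hoff⟩ := ih (applyOp (EditOp.delE e) G) hnd' hmem' hpr'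
      simp only [List.map_cons, applyScript_cons]
      refine ⟨.cons happ hvs, hV, ?_, hprop, ?_⟩
      · intro x
        rw [hE x]
        show x ∈ G.E.erase e ∧ x ∉ t ↔ _
        rw [Finset.mem_erase]
        constructor
        · rintro ⟨⟨hne, hxE⟩, hxt⟩
          exact ⟨hxE, by simp [List.mem_cons, hne, hxt]⟩
        · rintro ⟨hxE, hx⟩
          simp only [List.mem_cons, not_or] at hx
          exact ⟨⟨hx.1, hxE⟩, hx.2⟩
      · intro x hx
        simp only [List.mem_cons, not_or] at hx
        obtain ⟨h1, h2, h3⟩ := hoff x hx.2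
        refine ⟨h1.trans ?_, h2.trans ?_, h3.trans ?_⟩ <;>
          · show (if x = e then none else _) = _
            rw [if_neg hx.1]

lemma batch_delV (G : PreGraph ι L K D) (l : List ι) (hnd : l.Nodup)
    (hmem : ∀ v ∈ l, v ∈ G.V)
    (hinc : ∀ v ∈ l, ∀ e ∈ G.E, G.src e ≠ some v ∧ G.tgt e ≠ some v)
    (hpr : ∀ v ∈ l, ∀ k, G.prop v k = none) :
    ValidScript G (l.map fun v => .delV v) ∧
    (∀ x, x ∈ (applyScript (l.map fun v => .delV v) G).V ↔ x ∈ G.V ∧ x ∉ l) ∧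
    (applyScript (l.map fun v => .delV v) G).E = G.E ∧
    (applyScript (l.map fun v => .delV v) G).src = G.src ∧
    (applyScript (l.map fun v => .delV v) G).tgt = G.tgt ∧
    (applyScript (l.map fun v => .delV v) G).prop = G.prop ∧
    (∀ x, x ∉ l → (applyScript (l.map fun v => .delV v) G).lab x = G.lab x) := by
  induction l generalizing G with
  | nil => exact ⟨.nil G, by simp [applyScript], rfl, rfl, rfl, rfl, fun _ _ => rfl⟩
  | cons v t ih =>
      obtain ⟨hp, hnd'⟩ := List.nodup_cons.mp hnd
      have happ : Applicable (EditOp.delV v) G :=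
        ⟨hmem v (List.mem_cons_self ..), hinc v (List.mem_cons_self ..),
          hpr v (List.mem_cons_self ..)⟩
      have hmem' : ∀ v' ∈ t, v' ∈ (applyOp (EditOp.delV v) G).V := by
        intro v' hv'
        show v' ∈ G.V.erase v
        exact Finset.mem_erase.mpr ⟨fun hc => hp (hc ▸ hv'), hmem v' (List.mem_cons_of_mem _ hv')⟩
      have hinc' : ∀ v' ∈ t, ∀ e ∈ (applyOp (EditOp.delV v) G).E,
          (applyOp (EditOp.delV v) G).src e ≠ some v' ∧
          (applyOp (EditOp.delV v) G).tgt e ≠ some v' :=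
        fun v' hv' e he => hinc v' (List.mem_cons_of_mem _ hv') e he
      have hpr' : ∀ v' ∈ t, ∀ k, (applyOp (EditOp.delV v) G).prop v' k = none :=
        fun v' hv' k => hpr v' (List.mem_cons_of_mem _ hv') k
      obtain ⟨hvs, hV, hE, hs, ht', hprop, hoff⟩ :=
        ih (applyOp (EditOp.delV v) G) hnd' hmem' hinc' hpr'
      simp only [List.map_cons, applyScript_cons]
      refine ⟨.cons happ hvs, ?_, hE, hs, ht', hprop, ?_⟩
      · intro x
        rw [hV x]
        show x ∈ G.V.erase v ∧ x ∉ t ↔ _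
        rw [Finset.mem_erase]
        constructor
        · rintro ⟨⟨hne, hxV⟩, hxt⟩
          exact ⟨hxV, by simp [List.mem_cons, hne, hxt]⟩
        · rintro ⟨hxV, hx⟩
          simp only [List.mem_cons, not_or] at hx
          exact ⟨⟨hx.1, hxV⟩, hx.2⟩
      · intro x hx
        simp only [List.mem_cons, not_or] at hx
        refine (hoff x hx.2).trans ?_
        show (if x = v then none else _) = _
        rw [if_neg hx.1]

lemma batch_insV (G : PreGraph ι L K D) (l : List (ι × L))
    (hnd : (l.map Prod.fst).Nodup)
    (hfresh : ∀ p ∈ l, p.1 ∉ G.V ∪ G.E) :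
    ValidScript G (l.map fun p => .insV p.1 p.2) ∧
    (∀ x, x ∈ (applyScript (l.map fun p => .insV p.1 p.2) G).V ↔
      x ∈ G.V ∨ x ∈ l.map Prod.fst) ∧
    (applyScript (l.map fun p => .insV p.1 p.2) G).E = G.E ∧
    (applyScript (l.map fun p => .insV p.1 p.2) G).src = G.src ∧
    (applyScript (l.map fun p => .insV p.1 p.2) G).tgt = G.tgt ∧
    (applyScript (l.map fun p => .insV p.1 p.2) G).prop = G.prop ∧
    (∀ p ∈ l, (applyScript (l.map fun p => .insV p.1 p.2) G).lab p.1 = some p.2) ∧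
    (∀ x, x ∉ l.map Prod.fst → (applyScript (l.map fun p => .insV p.1 p.2) G).lab x = G.lab x) := by
  induction l generalizing G with
  | nil => exact ⟨.nil G, by simp [applyScript], rfl, rfl, rfl, rfl, by simp, fun _ _ => rfl⟩
  | cons p t ih =>
      rw [List.map_cons] at hnd
      obtain ⟨hp, hnd'⟩ := List.nodup_cons.mp hnd
      have happ : Applicable (EditOp.insV p.1 p.2) G := hfresh p (List.mem_cons_self ..)
      have hfresh' : ∀ q ∈ t, q.1 ∉ (applyOp (EditOp.insV p.1 p.2) G).V ∪
          (applyOp (EditOp.insV p.1 p.2) G).E := by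
        intro q hq hc
        have hqp : q.1 ≠ p.1 := fun hc2 => hp (hc2 ▸ List.mem_map_of_mem (f := Prod.fst) hq)
        rcases Finset.mem_union.mp hc with hcV | hcE
        · have : q.1 ∈ insert p.1 G.V := hcV
          rcases Finset.mem_insert.mp this with hc2 | hc3
          · exact hqp hc2
          · exact hfresh q (List.mem_cons_of_mem _ hq) (Finset.mem_union_left _ hc3)
        · exact hfresh q (List.mem_cons_of_mem _ hq) (Finset.mem_union_right _ hcE)
      obtain ⟨hvs, hV, hE, hs, ht', hprop, hon, hoff⟩ :=
        ih (applyOp (EditOp.insV p.1 p.2) G) hnd' hfresh'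
      simp only [List.map_cons, applyScript_cons]
      refine ⟨.cons happ hvs, ?_, hE, hs, ht', hprop, ?_, ?_⟩
      · intro x
        rw [hV x]
        show x ∈ insert p.1 G.V ∨ _ ↔ _
        rw [Finset.mem_insert, List.mem_cons]
        tauto
      · intro q hq
        rcases List.mem_cons.mp hq with rfl | hq'
        · rw [hoff q.1 (by simpa using hp)]
          show (if q.1 = q.1 then some q.2 else _) = some q.2
          simp
        · exact hon q hq'
      · intro x hx
        have h1 : x ∉ t.map Prod.fst := fun hc => hx (List.mem_cons_of_mem _ hc)
        have h2 : x ≠ p.1 := fun hc => hx (hc ▸ List.mem_cons_self ..)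
        rw [hoff x h1]
        show (if x = p.1 then some p.2 else _) = _
        rw [if_neg h2]

lemma batch_insE (G : PreGraph ι L K D) (l : List (ι × ι × ι × L))
    (hnd : (l.map Prod.fst).Nodup)
    (hfresh : ∀ p ∈ l, p.1 ∉ G.V ∪ G.E)
    (hends : ∀ p ∈ l, p.2.1 ∈ G.V ∧ p.2.2.1 ∈ G.V) :
    ValidScript G (l.map fun p => .insE p.1 p.2.1 p.2.2.1 p.2.2.2) ∧
    (applyScript (l.map fun p => .insE p.1 p.2.1 p.2.2.1 p.2.2.2) G).V = G.V ∧
    (∀ x, x ∈ (applyScript (l.map fun p => .insE p.1 p.2.1 p.2.2.1 p.2.2.2) G).E ↔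
      x ∈ G.E ∨ x ∈ l.map Prod.fst) ∧
    (applyScript (l.map fun p => .insE p.1 p.2.1 p.2.2.1 p.2.2.2) G).prop = G.prop ∧
    (∀ p ∈ l, (applyScript (l.map fun p => .insE p.1 p.2.1 p.2.2.1 p.2.2.2) G).src p.1 = some p.2.1 ∧
      (applyScript (l.map fun p => .insE p.1 p.2.1 p.2.2.1 p.2.2.2) G).tgt p.1 = some p.2.2.1 ∧
      (applyScript (l.map fun p => .insE p.1 p.2.1 p.2.2.1 p.2.2.2) G).lab p.1 = some p.2.2.2) ∧
    (∀ x, x ∉ l.map Prod.fst →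
      (applyScript (l.map fun p => .insE p.1 p.2.1 p.2.2.1 p.2.2.2) G).src x = G.src x ∧
      (applyScript (l.map fun p => .insE p.1 p.2.1 p.2.2.1 p.2.2.2) G).tgt x = G.tgt x ∧
      (applyScript (l.map fun p => .insE p.1 p.2.1 p.2.2.1 p.2.2.2) G).lab x = G.lab x) := by
  induction l generalizing G with
  | nil => exact ⟨.nil G, rfl, by simp [applyScript], rfl, by simp, fun _ _ => ⟨rfl, rfl, rfl⟩⟩
  | cons p t ih =>
      rw [List.map_cons] at hnd
      obtain ⟨hp, hnd'⟩ := List.nodup_cons.mp hnd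
      have happ : Applicable (EditOp.insE p.1 p.2.1 p.2.2.1 p.2.2.2) G :=
        ⟨(hends p (List.mem_cons_self ..)).1, (hends p (List.mem_cons_self ..)).2,
          hfresh p (List.mem_cons_self ..)⟩
      have hfresh' : ∀ q ∈ t, q.1 ∉ (applyOp (EditOp.insE p.1 p.2.1 p.2.2.1 p.2.2.2) G).V ∪
          (applyOp (EditOp.insE p.1 p.2.1 p.2.2.1 p.2.2.2) G).E := by
        intro q hq hc
        have hqp : q.1 ≠ p.1 := fun hc2 => hp (hc2 ▸ List.mem_map_of_mem (f := Prod.fst) hq)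
        rcases Finset.mem_union.mp hc with hcV | hcE
        · exact hfresh q (List.mem_cons_of_mem _ hq) (Finset.mem_union_left _ hcV)
        · have : q.1 ∈ insert p.1 G.E := hcE
          rcases Finset.mem_insert.mp this with hc2 | hc3
          · exact hqp hc2
          · exact hfresh q (List.mem_cons_of_mem _ hq) (Finset.mem_union_right _ hc3)
      have hends' : ∀ q ∈ t, q.2.1 ∈ (applyOp (EditOp.insE p.1 p.2.1 p.2.2.1 p.2.2.2) G).V ∧
          q.2.2.1 ∈ (applyOp (EditOp.insE p.1 p.2.1 p.2.2.1 p.2.2.2) G).V :=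
        fun q hq => hends q (List.mem_cons_of_mem _ hq)
      obtain ⟨hvs, hV, hE, hprop, hon, hoff⟩ :=
        ih (applyOp (EditOp.insE p.1 p.2.1 p.2.2.1 p.2.2.2) G) hnd' hfresh' hends'
      simp only [List.map_cons, applyScript_cons]
      refine ⟨.cons happ hvs, hV, ?_, hprop, ?_, ?_⟩
      · intro x
        rw [hE x]
        show x ∈ insert p.1 G.E ∨ _ ↔ _
        rw [Finset.mem_insert, List.mem_cons]
        tauto
      · intro q hq
        rcases List.mem_cons.mp hq with rfl | hq'
        · obtain ⟨h1, h2, h3⟩ := hoff q.1 (by simpa using hp)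
          refine ⟨h1.trans ?_, h2.trans ?_, h3.trans ?_⟩ <;>
            · show (if q.1 = q.1 then _ else _) = _
              simp
        · exact hon q hq'
      · intro x hx
        have h1 : x ∉ t.map Prod.fst := fun hc => hx (List.mem_cons_of_mem _ hc)
        have h2 : x ≠ p.1 := fun hc => hx (hc ▸ List.mem_cons_self ..)
        obtain ⟨g1, g2, g3⟩ := hoff x h1
        refine ⟨g1.trans ?_, g2.trans ?_, g3.trans ?_⟩ <;>
          · show (if x = p.1 then _ else _) = _
            rw [if_neg h2]

end BatchLemmas3
section Construction
set_option linter.unusedSectionVars false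

open Classical in
/-- Pullback of an identifier of `G2` along the partial map `h`. -/
noncomputable def PBack (h : ι → Option ι) : ι → ι :=
  fun y => if hy : ∃ x, h x = some y then hy.choose else y

lemma PBack_matched (h : ι → Option ι)
    (hinj : ∀ x x' y, h x = some y → h x' = some y → x = x') (x y : ι)
    (hx : h x = some y) : PBack h y = x := by
  unfold PBack
  rw [dif_pos ⟨x, hx⟩]
  exact hinj _ _ _ (⟨x, hx⟩ : ∃ x, h x = some y).choose_spec hx

lemma PBack_unmatched (h : ι → Option ι) (y : ι) (hy : ∀ x, h x ≠ some y) :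
    PBack h y = y := by
  unfold PBack
  rw [dif_neg]
  rintro ⟨x, hx⟩
  exact hy x hx

variable [DecidableEq ι] [DecidableEq K] [DecidableEq D]
variable (G1 G2 : PreGraph ι L K D) (h : ι → Option ι)

def cUV : Finset ι := G1.V.filter fun v => h v = none
def cUE : Finset ι := G1.E.filter fun e => h e = none
def cRV : Finset ι := G2.V.filter fun y => ∀ x ∈ G1.V ∪ G1.E, h x ≠ some y
def cRE : Finset ι := G2.E.filter fun y => ∀ x ∈ G1.V ∪ G1.E, h x ≠ some y

def cFdp : ι × K → Option (ι × K) := fun p =>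
  match G1.prop p.1 p.2, h p.1 with
  | some _, none => some p
  | some _, some y => (match G2.prop y p.2 with | none => some p | some _ => none)
  | none, _ => none

def cFup : ι × K → Option ((ι × K) × D) := fun p =>
  match h p.1, G1.prop p.1 p.2 with
  | some y, some d1 =>
      (match G2.prop y p.2 with
       | some d2 => if d1 = d2 then none else some (p, d2)
       | none => none)
  | _, _ => none

def cFip : ι × K → Option ((ι × K) × D) := fun p =>
  if p.1 ∈ G1.V ∪ G1.E then
    match h p.1, G1.prop p.1 p.2 with
    | some y, none => (G2.prop y p.2).map fun d => (p, d)
    | _, _ => none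
  else if ∀ x ∈ G1.V ∪ G1.E, h x ≠ some p.1 then (G2.prop p.1 p.2).map fun d => (p, d)
  else none

def cFiv : ι → Option (ι × L) := fun v => (G2.lab v).map fun lb => (v, lb)

noncomputable def cFie : ι → Option (ι × ι × ι × L) := fun e =>
  match G2.src e, G2.tgt e, G2.lab e with
  | some a, some b, some lb => some (e, PBack h a, PBack h b, lb)
  | _, _, _ => none

variable [Fintype K]

noncomputable def cdpL : List (ι × K) :=
  ((G1.V ∪ G1.E) ×ˢ (Finset.univ : Finset K)).toList.filterMap (cFdp G1 G2 h)
noncomputable def cupL : List ((ι × K) × D) :=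
  ((G1.V ∪ G1.E) ×ˢ (Finset.univ : Finset K)).toList.filterMap (cFup G1 G2 h)
noncomputable def cipL : List ((ι × K) × D) :=
  (((G1.V ∪ G1.E) ∪ (G2.V ∪ G2.E)) ×ˢ (Finset.univ : Finset K)).toList.filterMap (cFip G1 G2 h)
noncomputable def cdeL : List ι := (cUE G1 h).toList
noncomputable def cdvL : List ι := (cUV G1 h).toList
noncomputable def civL : List (ι × L) := (cRV G1 G2 h).toList.filterMap (cFiv G2)
noncomputable def cieL : List (ι × ι × ι × L) := (cRE G1 G2 h).toList.filterMap (cFie G2 h)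

lemma cFdp_self : ∀ p q, cFdp G1 G2 h p = some q → q = p := by
  intro p q hq
  unfold cFdp at hq
  split at hq
  · exact (Option.some_injective _ hq).symm
  · split at hq
    · exact (Option.some_injective _ hq).symm
    · exact absurd hq (by simp)
  · exact absurd hq (by simp)

lemma cFup_key : ∀ p q, cFup G1 G2 h p = some q → q.1 = p := by
  intro p q hq
  unfold cFup at hq
  split at hq
  · split at hq
    · split at hq
      · exact absurd hq (by simp)
      · rw [← Option.some_injective _ hq]
    · exact absurd hq (by simp)
  · exact absurd hq (by simp)

lemma cFip_key : ∀ p q, cFip G1 G2 h p = some q → q.1 = p := by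
  intro p q hq
  unfold cFip at hq
  split at hq
  · split at hq
    · rcases Option.map_eq_some_iff.mp hq with ⟨d, _, rfl⟩
      rfl
    · exact absurd hq (by simp)
  · split at hq
    · rcases Option.map_eq_some_iff.mp hq with ⟨d, _, rfl⟩
      rfl
    · exact absurd hq (by simp)

lemma cFiv_key : ∀ v q, cFiv G2 v = some q → q.1 = v := by
  intro v q hq
  rcases Option.map_eq_some_iff.mp hq with ⟨lb, _, rfl⟩
  rfl

lemma cFie_key : ∀ e q, cFie G2 h e = some q → q.1 = e := by
  intro e q hq
  unfold cFie at hq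
  split at hq
  · rw [← Option.some_injective _ hq]
  · exact absurd hq (by simp)

lemma cFdp_isSome : ∀ x k, (cFdp G1 G2 h (x, k)).isSome ↔
    (G1.prop x k).isSome ∧ ∀ y, h x = some y → G2.prop y k = none := by
  intro x k
  unfold cFdp
  rcases h1 : G1.prop x k with _ | d <;> rcases h2 : h x with _ | y <;> simp [h1, h2]
  rcases h3 : G2.prop y k with _ | d2 <;> simp [h3]

lemma cFup_isSome : ∀ x k, (cFup G1 G2 h (x, k)).isSome ↔
    ∃ y d1 d2, h x = some y ∧ G1.prop x k = some d1 ∧ G2.prop y k = some d2 ∧ d1 ≠ d2 := by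
  intro x k
  unfold cFup
  rcases h2 : h x with _ | y <;> rcases h1 : G1.prop x k with _ | d1 <;> simp [h1, h2]
  rcases h3 : G2.prop y k with _ | d2
  · simp [h3]
  · by_cases hd : d1 = d2 <;> simp [h3, hd]

end Construction
section Construction2
set_option linter.unusedSectionVars false

variable [DecidableEq ι] [DecidableEq K] [DecidableEq D]
variable (G1 G2 : PreGraph ι L K D) (h : ι → Option ι)

lemma cFup_elim : ∀ a q, cFup G1 G2 h a = some q →
    q.1 = a ∧ ∃ y d1, h a.1 = some y ∧ G1.prop a.1 a.2 = some d1 ∧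
      G2.prop y a.2 = some q.2 ∧ d1 ≠ q.2 := by
  intro a q hq
  unfold cFup at hq
  split at hq
  · rename_i y d1 hy hd1
    split at hq
    · rename_i d2 hd2
      by_cases hd : d1 = d2
      · rw [if_pos hd] at hq; exact nomatch hq
      · rw [if_neg hd] at hq
        obtain rfl := (Option.some_injective _ hq).symm
        exact ⟨rfl, y, d1, hy, hd1, hd2, hd⟩
    · exact nomatch hq
  · exact nomatch hq

lemma cFip_elim : ∀ a q, cFip G1 G2 h a = some q →
    q.1 = a ∧
    ((a.1 ∈ G1.V ∪ G1.E ∧ ∃ y, h a.1 = some y ∧ G1.prop a.1 a.2 = none ∧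
        G2.prop y a.2 = some q.2) ∨
     (a.1 ∉ G1.V ∪ G1.E ∧ (∀ x ∈ G1.V ∪ G1.E, h x ≠ some a.1) ∧
        G2.prop a.1 a.2 = some q.2)) := by
  intro a q hq
  unfold cFip at hq
  by_cases hm : a.1 ∈ G1.V ∪ G1.E
  · rw [if_pos hm] at hq
    split at hq
    · rename_i y hy hn
      rcases Option.map_eq_some_iff.mp hq with ⟨d, hd, rfl⟩
      exact ⟨rfl, Or.inl ⟨hm, y, hy, hn, hd⟩⟩
    · exact nomatch hq
  · rw [if_neg hm] at hq
    by_cases hu : ∀ x ∈ G1.V ∪ G1.E, h x ≠ some a.1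
    · rw [if_pos hu] at hq
      rcases Option.map_eq_some_iff.mp hq with ⟨d, hd, rfl⟩
      exact ⟨rfl, Or.inr ⟨hm, hu, hd⟩⟩
    · rw [if_neg hu] at hq
      exact absurd hq (by simp)

lemma cFiv_elim : ∀ v q, cFiv G2 v = some q → q.1 = v ∧ G2.lab v = some q.2 := by
  intro v q hq
  rcases Option.map_eq_some_iff.mp hq with ⟨lb, hlb, rfl⟩
  exact ⟨rfl, hlb⟩

lemma cFie_elim : ∀ e q, cFie G2 h e = some q →
    ∃ a b lb, G2.src e = some a ∧ G2.tgt e = some b ∧ G2.lab e = some lb ∧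
      q = (e, PBack h a, PBack h b, lb) := by
  intro e q hq
  unfold cFie at hq
  split at hq
  · rename_i a b lb ha hb hlb
    exact ⟨a, b, lb, ha, hb, hlb, (Option.some_injective _ hq).symm⟩
  · exact nomatch hq

end Construction2

section Counting

lemma length_filterMap_eq {α β : Type*} (F : α → Option β) (key : β → α)
    (hk : ∀ a b, F a = some b → key b = a) (l : List α) :
    (l.filterMap F).length = (l.filter (fun a => (F a).isSome)).length := by
  rw [← List.length_map key, filterMap_map_key F key hk]

lemma length_toList_filter {α : Type*} [DecidableEq α] (s : Finset α) (p : α → Bool) :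
    (s.toList.filter p).length = (s.filter (fun a => p a = true)).card := by
  rcases s with ⟨m, hm⟩
  show (m.toList.filter p).length = Multiset.card (Multiset.filter (fun a => p a = true) m)
  have h1 : Multiset.filter (fun a => p a = true) m
      = Multiset.filter (fun a => p a = true) ↑m.toList := by rw [Multiset.coe_toList]
  rw [h1, Multiset.filter_coe, Multiset.coe_card]
  congr 1
  apply List.filter_congr
  intro a _
  simp

lemma card_filter_product {α β : Type*} [DecidableEq α] [DecidableEq β]
    (s : Finset α) (t : Finset β) (P : α × β → Prop) [DecidablePred P] :
    ((s ×ˢ t).filter P).card = ∑ x ∈ s, (t.filter fun y => P (x, y)).card := by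
  rw [Finset.card_filter, Finset.sum_product]
  exact Finset.sum_congr rfl fun x _ => (Finset.card_filter _ _).symm

end Counting

/-- every partial isomorphism `h` induces a valid canonical edit
script of length exactly `cost h` mapping `G1` to a graph isomorphic to `G2`;
consequently `GED(G1,G2) ≤ cost h`.  (As in the paper, the identifier sets of
the two graphs are assumed disjoint.) -/
theorem piso_induces_canonical_script
    [DecidableEq ι] [DecidableEq K] [DecidableEq D] [Fintype K]
    (G1 G2 : PreGraph ι L K D) (hG1 : IsPGraph G1) (hG2 : IsPGraph G2)
    (hdisj : Disjoint (G1.V ∪ G1.E) (G2.V ∪ G2.E))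
    (h : ι → Option ι) (hpi : IsPartialIso G1 G2 h) :
    (∃ ops : List (EditOp ι L K D), Canonical ops ∧ ValidScript G1 ops ∧
      (∃ f : ι → ι, IsIso (applyScript ops G1) G2 f) ∧
      ops.length = pisoCost G1 G2 h) ∧
    GED G1 G2 ≤ pisoCost G1 G2 h := by
  classical
  obtain ⟨hpi1, hinj, hlabh, hsrch, htgth⟩ := hpi
  -- Basic facts about the partial isomorphism
  have hdomS : ∀ x y, h x = some y → x ∈ G1.V ∪ G1.E ∧ y ∈ G2.V ∪ G2.E := by
    intro x y hxy
    rcases hpi1 x y hxy with ⟨h1, h2⟩ | ⟨h1, h2⟩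
    · exact ⟨Finset.mem_union_left _ h1, Finset.mem_union_left _ h2⟩
    · exact ⟨Finset.mem_union_right _ h1, Finset.mem_union_right _ h2⟩
  have hTnone : ∀ y, y ∈ G2.V ∪ G2.E → h y = none := by
    intro y hy
    cases hyx : h y with
    | none => rfl
    | some z => exact absurd hy (Finset.disjoint_left.mp hdisj (hdomS y z hyx).1)
  have hVV : ∀ x y, h x = some y → x ∈ G1.V → y ∈ G2.V := by
    intro x y hxy hx
    rcases hpi1 x y hxy with ⟨_, h2⟩ | ⟨h1, _⟩
    · exact h2
    · exact absurd h1 (Finset.disjoint_left.mp hG1.disj hx)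
  have hEE : ∀ x y, h x = some y → x ∈ G1.E → y ∈ G2.E := by
    intro x y hxy hx
    rcases hpi1 x y hxy with ⟨h1, _⟩ | ⟨_, h2⟩
    · exact absurd hx (Finset.disjoint_left.mp hG1.disj h1)
    · exact h2
  have hVV' : ∀ x y, h x = some y → y ∈ G2.V → x ∈ G1.V := by
    intro x y hxy hy
    rcases hpi1 x y hxy with ⟨h1, _⟩ | ⟨_, h2⟩
    · exact h1
    · exact absurd h2 (Finset.disjoint_left.mp hG2.disj hy)
  have hEE' : ∀ x y, h x = some y → y ∈ G2.E → x ∈ G1.E := by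
    intro x y hxy hy
    rcases hpi1 x y hxy with ⟨_, h2⟩ | ⟨h1, _⟩
    · exact absurd hy (Finset.disjoint_left.mp hG2.disj h2)
    · exact h1
  -- Membership in base lists
  have base1 : ∀ p : ι × K,
      p ∈ ((G1.V ∪ G1.E) ×ˢ (Finset.univ : Finset K)).toList ↔ p.1 ∈ G1.V ∪ G1.E := by
    intro p; rw [Finset.mem_toList, Finset.mem_product]; simp
  have base2 : ∀ p : ι × K,
      p ∈ (((G1.V ∪ G1.E) ∪ (G2.V ∪ G2.E)) ×ˢ (Finset.univ : Finset K)).toList ↔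
        p.1 ∈ (G1.V ∪ G1.E) ∪ (G2.V ∪ G2.E) := by
    intro p; rw [Finset.mem_toList, Finset.mem_product]; simp
  -- Membership in constructed lists
  have hdp_mem : ∀ p : ι × K, p ∈ cdpL G1 G2 h ↔ p.1 ∈ G1.V ∪ G1.E ∧
      (G1.prop p.1 p.2).isSome ∧ ∀ y, h p.1 = some y → G2.prop y p.2 = none := by
    intro p
    unfold cdpL
    rw [List.mem_filterMap]
    constructor
    · rintro ⟨a, ha, hFa⟩
      obtain rfl := cFdp_self G1 G2 h a p hFa
      refine ⟨(base1 p).mp ha, (cFdp_isSome G1 G2 h p.1 p.2).mp ?_⟩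
      show (cFdp G1 G2 h p).isSome
      rw [hFa]; rfl
    · rintro ⟨hmem, hsome, hnone⟩
      have hiss : (cFdp G1 G2 h p).isSome := by
        show (cFdp G1 G2 h (p.1, p.2)).isSome
        exact (cFdp_isSome G1 G2 h p.1 p.2).mpr ⟨hsome, hnone⟩
      obtain ⟨q, hq⟩ := Option.isSome_iff_exists.mp hiss
      refine ⟨p, (base1 p).mpr hmem, ?_⟩
      rw [hq, cFdp_self G1 G2 h p q hq]
  have hup_val : ∀ p, p ∈ cupL G1 G2 h → p.1.1 ∈ G1.V ∪ G1.E ∧ cFup G1 G2 h p.1 = some p := by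
    intro p hp
    unfold cupL at hp
    rw [List.mem_filterMap] at hp
    obtain ⟨a, ha, hFa⟩ := hp
    obtain rfl := cFup_key G1 G2 h a p hFa
    exact ⟨(base1 p.1).mp ha, hFa⟩
  have hup_intro : ∀ (a : ι × K) q, a.1 ∈ G1.V ∪ G1.E → cFup G1 G2 h a = some q →
      q ∈ cupL G1 G2 h := by
    intro a q hmem hFa
    exact List.mem_filterMap.mpr ⟨a, (base1 a).mpr hmem, hFa⟩
  have hip_val : ∀ p, p ∈ cipL G1 G2 h →
      p.1.1 ∈ (G1.V ∪ G1.E) ∪ (G2.V ∪ G2.E) ∧ cFip G1 G2 h p.1 = some p := by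
    intro p hp
    unfold cipL at hp
    rw [List.mem_filterMap] at hp
    obtain ⟨a, ha, hFa⟩ := hp
    obtain rfl := cFip_key G1 G2 h a p hFa
    exact ⟨(base2 p.1).mp ha, hFa⟩
  have hip_intro : ∀ (a : ι × K) q, a.1 ∈ (G1.V ∪ G1.E) ∪ (G2.V ∪ G2.E) →
      cFip G1 G2 h a = some q → q ∈ cipL G1 G2 h := by
    intro a q hmem hFa
    exact List.mem_filterMap.mpr ⟨a, (base2 a).mpr hmem, hFa⟩
  have hiv_val : ∀ p, p ∈ civL G1 G2 h → p.1 ∈ cRV G1 G2 h ∧ cFiv G2 p.1 = some p := by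
    intro p hp
    unfold civL at hp
    rw [List.mem_filterMap] at hp
    obtain ⟨a, ha, hFa⟩ := hp
    obtain rfl := cFiv_key G2 a p hFa
    exact ⟨Finset.mem_toList.mp ha, hFa⟩
  have hiv_intro : ∀ (a : ι) q, a ∈ cRV G1 G2 h → cFiv G2 a = some q → q ∈ civL G1 G2 h := by
    intro a q hmem hFa
    exact List.mem_filterMap.mpr ⟨a, Finset.mem_toList.mpr hmem, hFa⟩
  have hie_val : ∀ p, p ∈ cieL G1 G2 h → p.1 ∈ cRE G1 G2 h ∧ cFie G2 h p.1 = some p := by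
    intro p hp
    unfold cieL at hp
    rw [List.mem_filterMap] at hp
    obtain ⟨a, ha, hFa⟩ := hp
    obtain rfl := cFie_key G2 h a p hFa
    exact ⟨Finset.mem_toList.mp ha, hFa⟩
  have hie_intro : ∀ (a : ι) q, a ∈ cRE G1 G2 h → cFie G2 h a = some q → q ∈ cieL G1 G2 h := by
    intro a q hmem hFa
    exact List.mem_filterMap.mpr ⟨a, Finset.mem_toList.mpr hmem, hFa⟩
  -- membership of cUV/cUE/cRV/cRE
  have hdeUE : ∀ e, e ∈ cdeL G1 h ↔ e ∈ G1.E ∧ h e = none := by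
    intro e; unfold cdeL cUE; rw [Finset.mem_toList, Finset.mem_filter]
  have hdvUV : ∀ v, v ∈ cdvL G1 h ↔ v ∈ G1.V ∧ h v = none := by
    intro v; unfold cdvL cUV; rw [Finset.mem_toList, Finset.mem_filter]
  have hcRV : ∀ x, x ∈ cRV G1 G2 h ↔ x ∈ G2.V ∧ ∀ x' ∈ G1.V ∪ G1.E, h x' ≠ some x := by
    intro x; unfold cRV; rw [Finset.mem_filter]
  have hcRE : ∀ x, x ∈ cRE G1 G2 h ↔ x ∈ G2.E ∧ ∀ x' ∈ G1.V ∪ G1.E, h x' ≠ some x := by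
    intro x; unfold cRE; rw [Finset.mem_filter]
  -- Nodup facts
  have hnd_dp : (cdpL G1 G2 h).Nodup :=
    List.Nodup.filterMap (fun a a' b hb hb' => by
      rw [← cFdp_self G1 G2 h a b hb, ← cFdp_self G1 G2 h a' b hb']) (Finset.nodup_toList _)
  have hnd_upk : ((cupL G1 G2 h).map Prod.fst).Nodup := by
    unfold cupL
    rw [filterMap_map_key _ _ (cFup_key G1 G2 h)]
    exact List.Nodup.filter _ (Finset.nodup_toList _)
  have hnd_ipk : ((cipL G1 G2 h).map Prod.fst).Nodup := by
    unfold cipL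
    rw [filterMap_map_key _ _ (cFip_key G1 G2 h)]
    exact List.Nodup.filter _ (Finset.nodup_toList _)
  have hnd_ivk : ((civL G1 G2 h).map Prod.fst).Nodup := by
    unfold civL
    rw [filterMap_map_key _ _ (cFiv_key G2)]
    exact List.Nodup.filter _ (Finset.nodup_toList _)
  have hnd_iek : ((cieL G1 G2 h).map Prod.fst).Nodup := by
    unfold cieL
    rw [filterMap_map_key _ _ (cFie_key G2 h)]
    exact List.Nodup.filter _ (Finset.nodup_toList _)
  -- key-membership elimination
  have hupk : ∀ a : ι × K, a ∈ (cupL G1 G2 h).map Prod.fst →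
      ∃ y d1 d2, h a.1 = some y ∧ G1.prop a.1 a.2 = some d1 ∧
        G2.prop y a.2 = some d2 ∧ d1 ≠ d2 := by
    intro a ha
    obtain ⟨p, hp, rfl⟩ := List.mem_map.mp ha
    obtain ⟨-, hF⟩ := hup_val p hp
    obtain ⟨-, y, d1, hy, hd1, hd2, hne⟩ := cFup_elim G1 G2 h p.1 p hF
    exact ⟨y, d1, p.2, hy, hd1, hd2, hne⟩
  have hipk : ∀ a : ι × K, a ∈ (cipL G1 G2 h).map Prod.fst →
      (a.1 ∈ G1.V ∪ G1.E ∧ ∃ y, h a.1 = some y ∧ G1.prop a.1 a.2 = none ∧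
        (G2.prop y a.2).isSome) ∨
      (a.1 ∉ G1.V ∪ G1.E ∧ (∀ x ∈ G1.V ∪ G1.E, h x ≠ some a.1) ∧
        (G2.prop a.1 a.2).isSome) := by
    intro a ha
    obtain ⟨p, hp, rfl⟩ := List.mem_map.mp ha
    obtain ⟨-, hF⟩ := hip_val p hp
    obtain ⟨-, hcase⟩ := cFip_elim G1 G2 h p.1 p hF
    rcases hcase with ⟨hm, y, hy, hn, hs⟩ | ⟨hm, hu, hs⟩
    · exact Or.inl ⟨hm, y, hy, hn, by rw [hs]; rfl⟩
    · exact Or.inr ⟨hm, hu, by rw [hs]; rfl⟩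
  have hivk : ∀ x, x ∈ (civL G1 G2 h).map Prod.fst ↔ x ∈ cRV G1 G2 h := by
    intro x
    constructor
    · intro hx
      obtain ⟨p, hp, rfl⟩ := List.mem_map.mp hx
      exact (hiv_val p hp).1
    · intro hx
      have hxV : x ∈ G2.V := ((hcRV x).mp hx).1
      obtain ⟨lb, hlb⟩ := Option.isSome_iff_exists.mp
        ((hG2.lab_dom x).mpr (Finset.mem_union_left _ hxV))
      have : cFiv G2 x = some (x, lb) := by simp [cFiv, hlb]
      exact List.mem_map.mpr ⟨(x, lb), hiv_intro x (x, lb) hx this, rfl⟩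
  have hiek : ∀ x, x ∈ (cieL G1 G2 h).map Prod.fst ↔ x ∈ cRE G1 G2 h := by
    intro x
    constructor
    · intro hx
      obtain ⟨p, hp, rfl⟩ := List.mem_map.mp hx
      exact (hie_val p hp).1
    · intro hx
      have hxE : x ∈ G2.E := ((hcRE x).mp hx).1
      obtain ⟨a, hsa⟩ := Option.isSome_iff_exists.mp ((hG2.src_dom x).mpr hxE)
      obtain ⟨b, hsb⟩ := Option.isSome_iff_exists.mp ((hG2.tgt_dom x).mpr hxE)
      obtain ⟨lb, hlb⟩ := Option.isSome_iff_exists.mp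
        ((hG2.lab_dom x).mpr (Finset.mem_union_right _ hxE))
      have : cFie G2 h x = some (x, PBack h a, PBack h b, lb) := by
        simp [cFie, hsa, hsb, hlb]
      exact List.mem_map.mpr ⟨_, hie_intro x _ hx this, rfl⟩
  -- STAGE A : delete properties
  obtain ⟨vsA, VA, EA, sA, tA, lA, pOnA, pOffA⟩ :=
    batch_delP G1 (cdpL G1 G2 h) hnd_dp (fun p hp => ((hdp_mem p).mp hp).2.1)
  set GA := applyScript ((cdpL G1 G2 h).map fun p => EditOp.delP p.1 p.2) G1 with hGAdef
  have hApnone : ∀ x, x ∈ G1.V ∪ G1.E → h x = none → ∀ k, GA.prop x k = none := by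
    intro x hx hxn k
    by_cases hk : (G1.prop x k).isSome
    · exact pOnA (x, k) ((hdp_mem (x, k)).mpr
        ⟨hx, hk, fun y hy => by rw [hxn] at hy; exact nomatch hy⟩)
    · rw [pOffA x k (fun hc => hk ((hdp_mem (x, k)).mp hc).2.1)]
      exact Option.not_isSome_iff_eq_none.mp hk
  -- STAGE B : delete unmatched edges
  obtain ⟨vsB, VB, EBiff, pB, offB⟩ :=
    batch_delE GA (cdeL G1 h) (Finset.nodup_toList _)
      (fun e he => by rw [EA]; exact ((hdeUE e).mp he).1)
      (fun e he k => hApnone e (Finset.mem_union_right _ ((hdeUE e).mp he).1)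
        ((hdeUE e).mp he).2 k)
  set GB := applyScript ((cdeL G1 h).map fun e => EditOp.delE e) GA with hGBdef
  -- STAGE C : delete unmatched nodes
  have hBsrc : ∀ e ∈ GB.E, ∃ e' w, h e = some e' ∧ GB.src e = some w ∧ (h w).isSome ∧
      ∃ w', GB.tgt e = some w' ∧ (h w').isSome := by
    intro e he
    obtain ⟨heA, hel⟩ := (EBiff e).mp he
    rw [EA] at heA
    have hem : h e ≠ none := fun hc => hel ((hdeUE e).mpr ⟨heA, hc⟩)
    obtain ⟨e', he'⟩ := Option.ne_none_iff_exists'.mp hem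
    have he'E : e' ∈ G2.E := hEE e e' he' heA
    obtain ⟨w, hw⟩ := Option.isSome_iff_exists.mp ((hG1.src_dom e).mpr heA)
    obtain ⟨w2, hw2⟩ := Option.isSome_iff_exists.mp ((hG1.tgt_dom e).mpr heA)
    have hsw : h w = G2.src e' := hsrch e e' w he' hw
    have htw : h w2 = G2.tgt e' := htgth e e' w2 he' hw2
    refine ⟨e', w, he', ?_, ?_, w2, ?_, ?_⟩
    · rw [(offB e hel).1, sA]; exact hw
    · rw [hsw]; exact (hG2.src_dom e').mpr he'E
    · rw [(offB e hel).2.1, tA]; exact hw2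
    · rw [htw]; exact (hG2.tgt_dom e').mpr he'E
  obtain ⟨vsC, VCiff, EC, sC, tC, pC, lOffC⟩ :=
    batch_delV GB (cdvL G1 h) (Finset.nodup_toList _)
      (fun v hv => by rw [VB, VA]; exact ((hdvUV v).mp hv).1)
      (fun v hv e he => by
        obtain ⟨e', w, he', hsw, hws, w2, htw, hw2s⟩ := hBsrc e he
        constructor
        · rw [hsw]
          intro hc
          have hwv : w = v := Option.some_injective _ hc
          rw [hwv, ((hdvUV v).mp hv).2] at hws
          exact Bool.noConfusion hws
        · rw [htw]
          intro hc
          have hwv : w2 = v := Option.some_injective _ hc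
          rw [hwv, ((hdvUV v).mp hv).2] at hw2s
          exact Bool.noConfusion hw2s)
      (fun v hv k => by
        rw [pB]
        exact hApnone v (Finset.mem_union_left _ ((hdvUV v).mp hv).1) ((hdvUV v).mp hv).2 k)
  set GC := applyScript ((cdvL G1 h).map fun v => EditOp.delV v) GB with hGCdef
  -- STAGE D : update properties
  obtain ⟨vsD, VD, ED, sD, tD, lD, pOnD, pOffD⟩ :=
    batch_updP GC (cupL G1 G2 h) hnd_upk
      (fun p hp => by
        obtain ⟨hmem, hF⟩ := hup_val p hp
        obtain ⟨-, y, d1, hy, hd1, hd2, hne⟩ := cFup_elim G1 G2 h p.1 p hF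
        have hnotdp : p.1 ∉ cdpL G1 G2 h := by
          intro hc
          have := ((hdp_mem p.1).mp hc).2.2 y hy
          rw [hd2] at this
          exact nomatch this
        rw [pC, pB]
        have : GA.prop p.1.1 p.1.2 = G1.prop p.1.1 p.1.2 := by
          have := pOffA p.1.1 p.1.2 (by rwa [Prod.mk.eta])
          exact this
        rw [this, hd1]; rfl)
  set GD := applyScript ((cupL G1 G2 h).map fun p => EditOp.updP p.1.1 p.1.2 p.2) GC
    with hGDdef
  -- STAGE E : insert unmatched nodes
  obtain ⟨vsE, VEiff, EE2, sE, tE, pE, lOnE, lOffE⟩ :=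
    batch_insV GD (civL G1 G2 h) hnd_ivk
      (fun p hp => by
        have hpT : p.1 ∈ G2.V ∪ G2.E :=
          Finset.mem_union_left _ ((hcRV p.1).mp (hiv_val p hp).1).1
        intro hc
        rcases Finset.mem_union.mp hc with hcV | hcE
        · rw [VD] at hcV
          have := ((VCiff p.1).mp hcV).1
          rw [VB, VA] at this
          exact Finset.disjoint_left.mp hdisj (Finset.mem_union_left _ this) hpT
        · rw [ED, EC] at hcE
          have := ((EBiff p.1).mp hcE).1
          rw [EA] at this
          exact Finset.disjoint_left.mp hdisj (Finset.mem_union_right _ this) hpT)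
  set GE := applyScript ((civL G1 G2 h).map fun p => EditOp.insV p.1 p.2) GD with hGEdef
  -- node membership in GE
  have hGEV : ∀ x, x ∈ GE.V ↔ (x ∈ G1.V ∧ h x ≠ none) ∨ x ∈ cRV G1 G2 h := by
    intro x
    rw [VEiff, VD, VCiff, VB, VA, hivk]
    constructor
    · rintro (⟨hx, hnd⟩ | hx)
      · exact Or.inl ⟨hx, fun hc => hnd ((hdvUV x).mpr ⟨hx, hc⟩)⟩
      · exact Or.inr hx
    · rintro (⟨hx, hnd⟩ | hx)
      · exact Or.inl ⟨hx, fun hc => hnd ((hdvUV x).mp hc).2⟩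
      · exact Or.inr hx
  -- STAGE F : insert unmatched edges
  obtain ⟨vsF, VF, EFiff, pF, onF, offF⟩ :=
    batch_insE GE (cieL G1 G2 h) hnd_iek
      (fun p hp => by
        have hpE : p.1 ∈ G2.E := ((hcRE p.1).mp (hie_val p hp).1).1
        intro hc
        rcases Finset.mem_union.mp hc with hcV | hcE
        · rcases (hGEV p.1).mp hcV with ⟨hx, _⟩ | hx
          · exact Finset.disjoint_left.mp hdisj (Finset.mem_union_left _ hx)
              (Finset.mem_union_right _ hpE)
          · exact Finset.disjoint_left.mp hG2.disj ((hcRV p.1).mp hx).1 hpE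
        · rw [EE2, ED, EC] at hcE
          have := ((EBiff p.1).mp hcE).1
          rw [EA] at this
          exact Finset.disjoint_left.mp hdisj (Finset.mem_union_right _ this)
            (Finset.mem_union_right _ hpE))
      (fun p hp => by
        obtain ⟨hpRE, hF⟩ := hie_val p hp
        obtain ⟨a, b, lb, hsa, hsb, hlb, heq⟩ := cFie_elim G2 h p.1 p hF
        have e1 : p.2.1 = PBack h a := by rw [heq]
        have e2 : p.2.2.1 = PBack h b := by rw [heq]
        rw [e1, e2]
        have hends : ∀ c, G2.src p.1 = some c ∨ G2.tgt p.1 = some c → PBack h c ∈ GE.V := by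
          intro c hc
          have hcV : c ∈ G2.V := by
            rcases hc with hc | hc
            · exact hG2.src_mem p.1 c hc
            · exact hG2.tgt_mem p.1 c hc
          by_cases hex : ∃ x, h x = some c
          · obtain ⟨x, hx⟩ := hex
            rw [PBack_matched h hinj x c hx]
            refine (hGEV x).mpr (Or.inl ⟨hVV' x c hx hcV, ?_⟩)
            rw [hx]; exact fun hc2 => nomatch hc2
          · rw [PBack_unmatched h c (fun x hx => hex ⟨x, hx⟩)]
            exact (hGEV c).mpr (Or.inr ((hcRV c).mpr
              ⟨hcV, fun x' _ hx' => hex ⟨x', hx'⟩⟩))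
        exact ⟨hends a (Or.inl hsa), hends b (Or.inr hsb)⟩)
  set GF := applyScript
    ((cieL G1 G2 h).map fun p => EditOp.insE p.1 p.2.1 p.2.2.1 p.2.2.2) GE with hGFdef
  have hFpropEq : ∀ x k, (x, k) ∉ (cupL G1 G2 h).map Prod.fst → (x, k) ∉ cdpL G1 G2 h →
      GF.prop x k = G1.prop x k := by
    intro x k h1 h2
    rw [pF, pE, pOffD x k h1, pC, pB, pOffA x k h2]
  -- STAGE G : insert properties
  obtain ⟨vsG, VG2, EG2, sG, tG, lG, pOnG, pOffG⟩ :=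
    batch_insP GF (cipL G1 G2 h) hnd_ipk
      (fun p hp => by
        obtain ⟨hmem, hF⟩ := hip_val p hp
        obtain ⟨-, hcase⟩ := cFip_elim G1 G2 h p.1 p hF
        rcases hcase with ⟨hm, y, hy, hn, -⟩ | ⟨hm, hu, -⟩
        · constructor
          · rcases Finset.mem_union.mp hm with hx | hx
            · refine Finset.mem_union_left _ ?_
              rw [VF]
              exact (hGEV p.1.1).mpr (Or.inl ⟨hx, fun hc => by
                rw [hy] at hc; exact nomatch hc⟩)
            · refine Finset.mem_union_right _ ?_
              rw [EFiff]
              refine Or.inl ?_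
              rw [EE2, ED, EC, EBiff, EA]
              refine ⟨hx, fun hc => ?_⟩
              have := ((hdeUE p.1.1).mp hc).2
              rw [hy] at this
              exact nomatch this
          · have h1 : (p.1.1, p.1.2) ∉ (cupL G1 G2 h).map Prod.fst := by
              rw [Prod.mk.eta]
              intro hc
              obtain ⟨y', d1, d2, hy', hd1, -, -⟩ := hupk p.1 hc
              rw [hn] at hd1
              exact nomatch hd1
            have h2 : (p.1.1, p.1.2) ∉ cdpL G1 G2 h := by
              rw [Prod.mk.eta]
              intro hc
              have := ((hdp_mem p.1).mp hc).2.1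
              rw [hn] at this
              exact Bool.noConfusion this
            rw [hFpropEq p.1.1 p.1.2 h1 h2, hn]
        · have hT : p.1.1 ∈ G2.V ∪ G2.E := by
            rcases Finset.mem_union.mp hmem with hx | hx
            · exact absurd hx hm
            · exact hx
          have hn : G1.prop p.1.1 p.1.2 = none :=
            Option.not_isSome_iff_eq_none.mp (fun hs' => hm (hG1.prop_dom _ _ hs'))
          constructor
          · rcases Finset.mem_union.mp hT with hx | hx
            · refine Finset.mem_union_left _ ?_
              rw [VF]
              exact (hGEV p.1.1).mpr (Or.inr ((hcRV p.1.1).mpr ⟨hx, hu⟩))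
            · refine Finset.mem_union_right _ ?_
              rw [EFiff]
              exact Or.inr ((hiek p.1.1).mpr ((hcRE p.1.1).mpr ⟨hx, hu⟩))
          · have h1 : (p.1.1, p.1.2) ∉ (cupL G1 G2 h).map Prod.fst := by
              rw [Prod.mk.eta]
              intro hc
              obtain ⟨y', d1, d2, hy', hd1, -, -⟩ := hupk p.1 hc
              rw [hn] at hd1
              exact nomatch hd1
            have h2 : (p.1.1, p.1.2) ∉ cdpL G1 G2 h := by
              rw [Prod.mk.eta]
              intro hc
              exact hm ((hdp_mem p.1).mp hc).1
            rw [hFpropEq p.1.1 p.1.2 h1 h2, hn])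
  set GG := applyScript ((cipL G1 G2 h).map fun p => EditOp.insP p.1.1 p.1.2 p.2) GF
    with hGGdef
  -- characterization of the final graph GG
  have hVG : ∀ x, x ∈ GG.V ↔ (x ∈ G1.V ∧ h x ≠ none) ∨ x ∈ cRV G1 G2 h := by
    intro x
    rw [VG2, VF]
    exact hGEV x
  have hEG : ∀ x, x ∈ GG.E ↔ (x ∈ G1.E ∧ h x ≠ none) ∨ x ∈ cRE G1 G2 h := by
    intro x
    rw [EG2, EFiff, EE2, ED, EC, EBiff, EA, hiek]
    constructor
    · rintro (⟨hx, hnd⟩ | hx)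
      · exact Or.inl ⟨hx, fun hc => hnd ((hdeUE x).mpr ⟨hx, hc⟩)⟩
      · exact Or.inr hx
    · rintro (⟨hx, hnd⟩ | hx)
      · exact Or.inl ⟨hx, fun hc => hnd ((hdeUE x).mp hc).2⟩
      · exact Or.inr hx
  have hnotiek : ∀ x, x ∈ G1.V ∪ G1.E → x ∉ (cieL G1 G2 h).map Prod.fst := by
    intro x hx hc
    exact Finset.disjoint_left.mp hdisj hx
      (Finset.mem_union_right _ ((hcRE x).mp ((hiek x).mp hc)).1)
  have hnotivk : ∀ x, x ∈ G1.V ∪ G1.E → x ∉ (civL G1 G2 h).map Prod.fst := by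
    intro x hx hc
    exact Finset.disjoint_left.mp hdisj hx
      (Finset.mem_union_left _ ((hcRV x).mp ((hivk x).mp hc)).1)
  have hlabM : ∀ x, x ∈ G1.V ∪ G1.E → h x ≠ none → GG.lab x = G1.lab x := by
    intro x hx hxn
    rw [lG, (offF x (hnotiek x hx)).2.2, lOffE x (hnotivk x hx), lD,
      lOffC x (fun hc => hxn ((hdvUV x).mp hc).2),
      (offB x (fun hc => hxn ((hdeUE x).mp hc).2)).2.2, lA]
  have hsrcM : ∀ e, e ∈ G1.V ∪ G1.E → h e ≠ none → GG.src e = G1.src e := by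
    intro e he hen
    rw [sG, (offF e (hnotiek e he)).1, sE, sD, sC,
      (offB e (fun hc => hen ((hdeUE e).mp hc).2)).1, sA]
  have htgtM : ∀ e, e ∈ G1.V ∪ G1.E → h e ≠ none → GG.tgt e = G1.tgt e := by
    intro e he hen
    rw [tG, (offF e (hnotiek e he)).2.1, tE, tD, tC,
      (offB e (fun hc => hen ((hdeUE e).mp hc).2)).2.1, tA]
  have hlabRV : ∀ z, z ∈ cRV G1 G2 h → GG.lab z = G2.lab z := by
    intro z hz
    have hzV : z ∈ G2.V := ((hcRV z).mp hz).1
    obtain ⟨lb, hlb⟩ := Option.isSome_iff_exists.mp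
      ((hG2.lab_dom z).mpr (Finset.mem_union_left _ hzV))
    have hmem : (z, lb) ∈ civL G1 G2 h := hiv_intro z (z, lb) hz (by simp [cFiv, hlb])
    have hnie : z ∉ (cieL G1 G2 h).map Prod.fst := fun hc =>
      Finset.disjoint_left.mp hG2.disj hzV ((hcRE z).mp ((hiek z).mp hc)).1
    rw [lG, (offF z hnie).2.2]
    have := lOnE (z, lb) hmem
    rw [this, hlb]
  have hRE_fields : ∀ z, z ∈ cRE G1 G2 h →
      GG.lab z = G2.lab z ∧
      (∀ a, G2.src z = some a → GG.src z = some (PBack h a)) ∧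
      (∀ b, G2.tgt z = some b → GG.tgt z = some (PBack h b)) := by
    intro z hz
    have hzE : z ∈ G2.E := ((hcRE z).mp hz).1
    obtain ⟨a, hsa⟩ := Option.isSome_iff_exists.mp ((hG2.src_dom z).mpr hzE)
    obtain ⟨b, hsb⟩ := Option.isSome_iff_exists.mp ((hG2.tgt_dom z).mpr hzE)
    obtain ⟨lb, hlb⟩ := Option.isSome_iff_exists.mp
      ((hG2.lab_dom z).mpr (Finset.mem_union_right _ hzE))
    have hmem : (z, PBack h a, PBack h b, lb) ∈ cieL G1 G2 h :=
      hie_intro z _ hz (by simp [cFie, hsa, hsb, hlb])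
    obtain ⟨f1, f2, f3⟩ := onF (z, PBack h a, PBack h b, lb) hmem
    refine ⟨?_, ?_, ?_⟩
    · rw [lG, f3, hlb]
    · intro a' ha'
      rw [hsa] at ha'
      obtain rfl := Option.some_injective _ ha'
      rw [sG, f1]
    · intro b' hb'
      rw [hsb] at hb'
      obtain rfl := Option.some_injective _ hb'
      rw [tG, f2]
  -- final property facts
  have hP1 : ∀ x y, h x = some y → ∀ k, GG.prop x k = G2.prop y k := by
    intro x y hxy k
    have hxS : x ∈ G1.V ∪ G1.E := (hdomS x y hxy).1
    rcases hd2 : G2.prop y k with _ | d2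
    · have hnip : (x, k) ∉ (cipL G1 G2 h).map Prod.fst := by
        intro hc
        rcases hipk (x, k) hc with ⟨-, y', hy', -, hs⟩ | ⟨hm, -, -⟩
        · obtain rfl := Option.some_injective _ (hxy.symm.trans hy')
          rw [hd2] at hs
          exact Bool.noConfusion hs
        · exact hm hxS
      have hnup : (x, k) ∉ (cupL G1 G2 h).map Prod.fst := by
        intro hc
        obtain ⟨y', d1, d2', hy', hd1, hd2', -⟩ := hupk (x, k) hc
        obtain rfl := Option.some_injective _ (hxy.symm.trans hy')
        rw [hd2] at hd2'
        exact nomatch hd2'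
      rw [pOffG x k hnip, pF, pE, pOffD x k hnup, pC, pB]
      rcases hd1 : G1.prop x k with _ | d1
      · rw [pOffA x k (fun hc => by
          have := ((hdp_mem (x, k)).mp hc).2.1
          rw [hd1] at this
          exact Bool.noConfusion this)]
        exact hd1
      · exact pOnA (x, k) ((hdp_mem (x, k)).mpr ⟨hxS, by rw [hd1]; rfl,
          fun y' hy' => by
            obtain rfl := Option.some_injective _ (hxy.symm.trans hy')
            exact hd2⟩)
    · rcases hd1 : G1.prop x k with _ | d1
      · have hmem : ((x, k), d2) ∈ cipL G1 G2 h :=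
          hip_intro (x, k) ((x, k), d2) (Finset.mem_union_left _ hxS)
            (by simp [cFip, hxS, hxy, hd1, hd2])
        rw [show GG.prop x k = some d2 from pOnG (((x, k)), d2) hmem]
      · have hnip : (x, k) ∉ (cipL G1 G2 h).map Prod.fst := by
          intro hc
          rcases hipk (x, k) hc with ⟨-, y', hy', hn, -⟩ | ⟨hm, -, -⟩
          · rw [hd1] at hn
            exact nomatch hn
          · exact hm hxS
        by_cases hdd : d1 = d2
        · have hnup : (x, k) ∉ (cupL G1 G2 h).map Prod.fst := by
            intro hc
            obtain ⟨y', d1', d2', hy', hd1', hd2', hne⟩ := hupk (x, k) hc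
            obtain rfl := Option.some_injective _ (hxy.symm.trans hy')
            rw [hd1] at hd1'
            obtain rfl := Option.some_injective _ hd1'
            rw [hd2] at hd2'
            obtain rfl := Option.some_injective _ hd2'
            exact hne hdd
          have hndp : (x, k) ∉ cdpL G1 G2 h := by
            intro hc
            have := ((hdp_mem (x, k)).mp hc).2.2 y hxy
            rw [hd2] at this
            exact nomatch this
          rw [pOffG x k hnip, pF, pE, pOffD x k hnup, pC, pB, pOffA x k hndp, hd1, hdd]
        · have hmem : ((x, k), d2) ∈ cupL G1 G2 h :=
            hup_intro (x, k) ((x, k), d2) hxS (by simp [cFup, hxy, hd1, hd2, hdd])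
          rw [pOffG x k hnip, pF, pE,
            show GD.prop x k = some d2 from pOnD (((x, k)), d2) hmem]
  have hP2 : ∀ z, z ∈ G2.V ∪ G2.E → (∀ x ∈ G1.V ∪ G1.E, h x ≠ some z) →
      ∀ k, GG.prop z k = G2.prop z k := by
    intro z hzT hzun k
    have hzS : z ∉ G1.V ∪ G1.E := Finset.disjoint_right.mp hdisj hzT
    have hzn : G1.prop z k = none :=
      Option.not_isSome_iff_eq_none.mp (fun hs' => hzS (hG1.prop_dom _ _ hs'))
    rcases hd2 : G2.prop z k with _ | d2
    · have hnip : (z, k) ∉ (cipL G1 G2 h).map Prod.fst := by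
        intro hc
        rcases hipk (z, k) hc with ⟨hm, -⟩ | ⟨-, -, hs⟩
        · exact hzS hm
        · rw [hd2] at hs
          exact Bool.noConfusion hs
      have hnup : (z, k) ∉ (cupL G1 G2 h).map Prod.fst := by
        intro hc
        obtain ⟨y', d1, d2', hy', hd1, -, -⟩ := hupk (z, k) hc
        rw [hzn] at hd1
        exact nomatch hd1
      have hndp : (z, k) ∉ cdpL G1 G2 h := by
        intro hc
        exact hzS ((hdp_mem (z, k)).mp hc).1
      rw [pOffG z k hnip, pF, pE, pOffD z k hnup, pC, pB, pOffA z k hndp, hzn]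
    · have hmem : ((z, k), d2) ∈ cipL G1 G2 h :=
        hip_intro (z, k) ((z, k), d2) (Finset.mem_union_right _ hzT)
          (by
            simp [cFip, hzS, hd2]
            exact fun x hx => hzun x (Finset.mem_union.mpr hx))
      rw [show GG.prop z k = some d2 from pOnG (((z, k)), d2) hmem]
  -- the edit script
  set OPS : List (EditOp ι L K D) :=
    ((cdpL G1 G2 h).map fun p => EditOp.delP p.1 p.2) ++
      (((cdeL G1 h).map fun e => EditOp.delE e) ++
        (((cdvL G1 h).map fun v => EditOp.delV v) ++
          (((cupL G1 G2 h).map fun p => EditOp.updP p.1.1 p.1.2 p.2) ++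
            (((civL G1 G2 h).map fun p => EditOp.insV p.1 p.2) ++
              (((cieL G1 G2 h).map fun p => EditOp.insE p.1 p.2.1 p.2.2.1 p.2.2.2) ++
                ((cipL G1 G2 h).map fun p => EditOp.insP p.1.1 p.1.2 p.2)))))) with hOPSdef
  have hval : ValidScript G1 OPS := by
    rw [hOPSdef]
    refine validScript_append vsA ?_
    rw [← hGAdef]
    refine validScript_append vsB ?_
    rw [← hGBdef]
    refine validScript_append vsC ?_
    rw [← hGCdef]
    refine validScript_append vsD ?_
    rw [← hGDdef]
    refine validScript_append vsE ?_
    rw [← hGEdef]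
    refine validScript_append vsF ?_
    rw [← hGFdef]
    exact vsG
  have happly : applyScript OPS G1 = GG := by
    rw [hOPSdef, applyScript_append', ← hGAdef, applyScript_append', ← hGBdef,
      applyScript_append', ← hGCdef, applyScript_append', ← hGDdef,
      applyScript_append', ← hGEdef, applyScript_append', ← hGFdef, ← hGGdef]
  have hcan : Canonical OPS := by
    refine ⟨(cdpL G1 G2 h).map fun p => EditOp.delP p.1 p.2,
      (cdeL G1 h).map fun e => EditOp.delE e,
      (cdvL G1 h).map fun v => EditOp.delV v,
      (cupL G1 G2 h).map fun p => EditOp.updP p.1.1 p.1.2 p.2,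
      (civL G1 G2 h).map fun p => EditOp.insV p.1 p.2,
      (cieL G1 G2 h).map fun p => EditOp.insE p.1 p.2.1 p.2.2.1 p.2.2.2,
      (cipL G1 G2 h).map fun p => EditOp.insP p.1.1 p.1.2 p.2,
      ?_, ?_, ?_, ?_, ?_, ?_, ?_, ?_⟩
    · rw [hOPSdef]; simp [List.append_assoc]
    · intro op hop
      obtain ⟨p, -, rfl⟩ := List.mem_map.mp hop
      exact ⟨p.1, p.2, rfl⟩
    · intro op hop
      obtain ⟨p, -, rfl⟩ := List.mem_map.mp hop
      exact ⟨p, rfl⟩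
    · intro op hop
      obtain ⟨p, -, rfl⟩ := List.mem_map.mp hop
      exact ⟨p, rfl⟩
    · intro op hop
      obtain ⟨p, -, rfl⟩ := List.mem_map.mp hop
      exact ⟨p.1.1, p.1.2, p.2, rfl⟩
    · intro op hop
      obtain ⟨p, -, rfl⟩ := List.mem_map.mp hop
      exact ⟨p.1, p.2, rfl⟩
    · intro op hop
      obtain ⟨p, -, rfl⟩ := List.mem_map.mp hop
      exact ⟨p.1, p.2.1, p.2.2.1, p.2.2.2, rfl⟩
    · intro op hop
      obtain ⟨p, -, rfl⟩ := List.mem_map.mp hop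
      exact ⟨p.1.1, p.1.2, p.2, rfl⟩
  -- the isomorphism
  set f : ι → ι := fun x => (h x).getD x with hfdef
  set g : ι → ι := PBack h with hgdef
  have hfx : ∀ x y, h x = some y → f x = y := by
    intro x y hxy; rw [hfdef]; simp [hxy]
  have hfn : ∀ x, h x = none → f x = x := by
    intro x hx; rw [hfdef]; simp [hx]
  have hg1 : ∀ x y, h x = some y → g y = x := fun x y hxy => PBack_matched h hinj x y hxy
  have hg2 : ∀ y, (∀ x, h x ≠ some y) → g y = y := fun y hy => PBack_unmatched h y hy
  have hRVn : ∀ x, x ∈ cRV G1 G2 h → h x = none := fun x hx =>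
    hTnone x (Finset.mem_union_left _ ((hcRV x).mp hx).1)
  have hREn : ∀ x, x ∈ cRE G1 G2 h → h x = none := fun x hx =>
    hTnone x (Finset.mem_union_right _ ((hcRE x).mp hx).1)
  have hRVun : ∀ x, x ∈ cRV G1 G2 h → ∀ x', h x' ≠ some x := fun x hx x' hc =>
    ((hcRV x).mp hx).2 x' (hdomS x' x hc).1 hc
  have hREun : ∀ x, x ∈ cRE G1 G2 h → ∀ x', h x' ≠ some x := fun x hx x' hc =>
    ((hcRE x).mp hx).2 x' (hdomS x' x hc).1 hc
  have hfg2 : ∀ c, c ∈ G2.V ∪ G2.E → f (PBack h c) = c := by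
    intro c hc
    by_cases hex : ∃ x, h x = some c
    · obtain ⟨x, hx⟩ := hex
      rw [PBack_matched h hinj x c hx]
      exact hfx x c hx
    · rw [PBack_unmatched h c (fun x hx => hex ⟨x, hx⟩)]
      exact hfn c (hTnone c hc)
  have hom1 : IsHom GG G2 f := by
    refine ⟨?_, ?_, ?_, ?_, ?_, ?_⟩
    · intro v hv
      rcases (hVG v).mp hv with ⟨hv1, hvn⟩ | hvR
      · obtain ⟨y, hy⟩ := Option.ne_none_iff_exists'.mp hvn
        rw [hfx v y hy]
        exact hVV v y hy hv1
      · rw [hfn v (hRVn v hvR)]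
        exact ((hcRV v).mp hvR).1
    · intro e he
      rcases (hEG e).mp he with ⟨he1, hen⟩ | heR
      · obtain ⟨y, hy⟩ := Option.ne_none_iff_exists'.mp hen
        rw [hfx e y hy]
        exact hEE e y hy he1
      · rw [hfn e (hREn e heR)]
        exact ((hcRE e).mp heR).1
    · intro x hx
      rcases Finset.mem_union.mp hx with hx1 | hx1
      · rcases (hVG x).mp hx1 with ⟨hxv, hxn⟩ | hxR
        · obtain ⟨y, hy⟩ := Option.ne_none_iff_exists'.mp hxn
          rw [hfx x y hy, hlabh x y hy, hlabM x (Finset.mem_union_left _ hxv) hxn]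
        · rw [hfn x (hRVn x hxR), hlabRV x hxR]
      · rcases (hEG x).mp hx1 with ⟨hxe, hxn⟩ | hxR
        · obtain ⟨y, hy⟩ := Option.ne_none_iff_exists'.mp hxn
          rw [hfx x y hy, hlabh x y hy, hlabM x (Finset.mem_union_right _ hxe) hxn]
        · rw [hfn x (hREn x hxR), (hRE_fields x hxR).1]
    · intro e he v hsv
      rcases (hEG e).mp he with ⟨heE, hen⟩ | heR
      · obtain ⟨e', he'⟩ := Option.ne_none_iff_exists'.mp hen
        rw [hsrcM e (Finset.mem_union_right _ heE) hen] at hsv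
        rw [hfx e e' he']
        have hve : h v = G2.src e' := hsrch e e' v he' hsv
        have hsome : (h v).isSome := by
          rw [hve]
          exact (hG2.src_dom e').mpr (hEE e e' he' heE)
        obtain ⟨w, hw⟩ := Option.isSome_iff_exists.mp hsome
        rw [hw] at hve
        rw [← hve, hfx v w hw]
      · obtain ⟨a, hsa⟩ := Option.isSome_iff_exists.mp
          ((hG2.src_dom e).mpr ((hcRE e).mp heR).1)
        have := (hRE_fields e heR).2.1 a hsa
        rw [this] at hsv
        obtain rfl := Option.some_injective _ hsv.symm
        rw [hfn e (hREn e heR), hsa, hfg2 a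
          (Finset.mem_union_left _ (hG2.src_mem e a hsa))]
      -- careful: v was defined as PBack h a via rfl pattern
    · intro e he v hsv
      rcases (hEG e).mp he with ⟨heE, hen⟩ | heR
      · obtain ⟨e', he'⟩ := Option.ne_none_iff_exists'.mp hen
        rw [htgtM e (Finset.mem_union_right _ heE) hen] at hsv
        rw [hfx e e' he']
        have hve : h v = G2.tgt e' := htgth e e' v he' hsv
        have hsome : (h v).isSome := by
          rw [hve]
          exact (hG2.tgt_dom e').mpr (hEE e e' he' heE)
        obtain ⟨w, hw⟩ := Option.isSome_iff_exists.mp hsome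
        rw [hw] at hve
        rw [← hve, hfx v w hw]
      · obtain ⟨a, hsa⟩ := Option.isSome_iff_exists.mp
          ((hG2.tgt_dom e).mpr ((hcRE e).mp heR).1)
        have := (hRE_fields e heR).2.2 a hsa
        rw [this] at hsv
        obtain rfl := Option.some_injective _ hsv.symm
        rw [hfn e (hREn e heR), hsa, hfg2 a
          (Finset.mem_union_left _ (hG2.tgt_mem e a hsa))]
    · intro x hx k d hpd
      rcases Finset.mem_union.mp hx with hx1 | hx1
      · rcases (hVG x).mp hx1 with ⟨hxv, hxn⟩ | hxR
        · obtain ⟨y, hy⟩ := Option.ne_none_iff_exists'.mp hxn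
          rw [hfx x y hy]
          rw [hP1 x y hy k] at hpd
          exact hpd
        · rw [hfn x (hRVn x hxR)]
          rw [hP2 x (Finset.mem_union_left _ ((hcRV x).mp hxR).1)
            ((hcRV x).mp hxR).2 k] at hpd
          exact hpd
      · rcases (hEG x).mp hx1 with ⟨hxe, hxn⟩ | hxR
        · obtain ⟨y, hy⟩ := Option.ne_none_iff_exists'.mp hxn
          rw [hfx x y hy]
          rw [hP1 x y hy k] at hpd
          exact hpd
        · rw [hfn x (hREn x hxR)]
          rw [hP2 x (Finset.mem_union_right _ ((hcRE x).mp hxR).1)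
            ((hcRE x).mp hxR).2 k] at hpd
          exact hpd
  have hom2 : IsHom G2 GG g := by
    refine ⟨?_, ?_, ?_, ?_, ?_, ?_⟩
    · intro y hy
      by_cases hex : ∃ x, h x = some y
      · obtain ⟨x, hx⟩ := hex
        rw [hg1 x y hx]
        exact (hVG x).mpr (Or.inl ⟨hVV' x y hx hy, by
          rw [hx]; exact fun hc => nomatch hc⟩)
      · rw [hg2 y (fun x hx => hex ⟨x, hx⟩)]
        exact (hVG y).mpr (Or.inr ((hcRV y).mpr ⟨hy, fun x' _ hx' => hex ⟨x', hx'⟩⟩))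
    · intro y hy
      by_cases hex : ∃ x, h x = some y
      · obtain ⟨x, hx⟩ := hex
        rw [hg1 x y hx]
        exact (hEG x).mpr (Or.inl ⟨hEE' x y hx hy, by
          rw [hx]; exact fun hc => nomatch hc⟩)
      · rw [hg2 y (fun x hx => hex ⟨x, hx⟩)]
        exact (hEG y).mpr (Or.inr ((hcRE y).mpr ⟨hy, fun x' _ hx' => hex ⟨x', hx'⟩⟩))
    · intro y hy
      by_cases hex : ∃ x, h x = some y
      · obtain ⟨x, hx⟩ := hex
        rw [hg1 x y hx,
          hlabM x (hdomS x y hx).1 (by rw [hx]; exact fun hc => nomatch hc)]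
        exact (hlabh x y hx).symm
      · rw [hg2 y (fun x hx => hex ⟨x, hx⟩)]
        rcases Finset.mem_union.mp hy with hy1 | hy1
        · exact hlabRV y ((hcRV y).mpr ⟨hy1, fun x' _ hx' => hex ⟨x', hx'⟩⟩)
        · exact (hRE_fields y ((hcRE y).mpr ⟨hy1, fun x' _ hx' => hex ⟨x', hx'⟩⟩)).1
    · intro e' he' w hw
      by_cases hex : ∃ e, h e = some e'
      · obtain ⟨e, he⟩ := hex
        rw [hg1 e e' he]
        have heE : e ∈ G1.E := hEE' e e' he he'
        have hen : h e ≠ none := by rw [he]; exact fun hc => nomatch hc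
        obtain ⟨v, hv⟩ := Option.isSome_iff_exists.mp ((hG1.src_dom e).mpr heE)
        rw [hsrcM e (Finset.mem_union_right _ heE) hen, hv]
        have hvw : h v = some w := by rw [hsrch e e' v he hv, hw]
        rw [hg1 v w hvw]
      · have heR : e' ∈ cRE G1 G2 h := (hcRE e').mpr ⟨he', fun x' _ hx' => hex ⟨x', hx'⟩⟩
        rw [hg2 e' (fun x hx => hex ⟨x, hx⟩)]
        rw [(hRE_fields e' heR).2.1 w hw, hgdef]
    · intro e' he' w hw
      by_cases hex : ∃ e, h e = some e'
      · obtain ⟨e, he⟩ := hex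
        rw [hg1 e e' he]
        have heE : e ∈ G1.E := hEE' e e' he he'
        have hen : h e ≠ none := by rw [he]; exact fun hc => nomatch hc
        obtain ⟨v, hv⟩ := Option.isSome_iff_exists.mp ((hG1.tgt_dom e).mpr heE)
        rw [htgtM e (Finset.mem_union_right _ heE) hen, hv]
        have hvw : h v = some w := by rw [htgth e e' v he hv, hw]
        rw [hg1 v w hvw]
      · have heR : e' ∈ cRE G1 G2 h := (hcRE e').mpr ⟨he', fun x' _ hx' => hex ⟨x', hx'⟩⟩
        rw [hg2 e' (fun x hx => hex ⟨x, hx⟩)]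
        rw [(hRE_fields e' heR).2.2 w hw, hgdef]
    · intro y hy k d hpd
      by_cases hex : ∃ x, h x = some y
      · obtain ⟨x, hx⟩ := hex
        rw [hg1 x y hx, hP1 x y hx k]
        exact hpd
      · rw [hg2 y (fun x hx => hex ⟨x, hx⟩),
          hP2 y hy (fun x' _ hx' => hex ⟨x', hx'⟩) k]
        exact hpd
  have round1 : ∀ x ∈ GG.V ∪ GG.E, g (f x) = x := by
    intro x hx
    have hcase : (x ∈ G1.V ∪ G1.E ∧ h x ≠ none) ∨ x ∈ cRV G1 G2 h ∪ cRE G1 G2 h := by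
      rcases Finset.mem_union.mp hx with hx1 | hx1
      · rcases (hVG x).mp hx1 with ⟨hv, hn⟩ | hr
        · exact Or.inl ⟨Finset.mem_union_left _ hv, hn⟩
        · exact Or.inr (Finset.mem_union_left _ hr)
      · rcases (hEG x).mp hx1 with ⟨hv, hn⟩ | hr
        · exact Or.inl ⟨Finset.mem_union_right _ hv, hn⟩
        · exact Or.inr (Finset.mem_union_right _ hr)
    rcases hcase with ⟨-, hn⟩ | hr
    · obtain ⟨y, hy⟩ := Option.ne_none_iff_exists'.mp hn
      rw [hfx x y hy]
      exact hg1 x y hy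
    · have hun : ∀ x', h x' ≠ some x := by
        rcases Finset.mem_union.mp hr with h1 | h1
        · exact hRVun x h1
        · exact hREun x h1
      have hn : h x = none := by
        rcases Finset.mem_union.mp hr with h1 | h1
        · exact hRVn x h1
        · exact hREn x h1
      rw [hfn x hn]
      exact hg2 x hun
  have round2 : ∀ y ∈ G2.V ∪ G2.E, f (g y) = y := by
    intro y hy
    rw [hgdef]
    exact hfg2 y hy
  have hiso : ∃ f' : ι → ι, IsIso (applyScript OPS G1) G2 f' := by
    rw [happly]
    exact ⟨f, hom1, g, hom2, round1, round2⟩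
  have hperx : ∀ x ∈ G1.V ∪ G1.E,
      (Finset.univ.filter fun k => (cFdp G1 G2 h (x, k)).isSome = true).card +
      ((Finset.univ.filter fun k => (cFup G1 G2 h (x, k)).isSome = true).card +
       (Finset.univ.filter fun k => (cFip G1 G2 h (x, k)).isSome = true).card) =
      ((h x).elim 0 fun y => mismatchCount G1 G2 x y) +
        (if h x = none then propsOn G1 x else 0) := by
    intro x hxS
    rcases hx : h x with _ | y
    · have hB : (Finset.univ.filter fun k => (cFup G1 G2 h (x, k)).isSome = true).card = 0 := by
        rw [Finset.card_eq_zero, Finset.filter_eq_empty_iff]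
        intro k _
        rcases h1 : G1.prop x k with _ | d <;> simp [cFup, hx, h1]
      have hC : (Finset.univ.filter fun k => (cFip G1 G2 h (x, k)).isSome = true).card = 0 := by
        rw [Finset.card_eq_zero, Finset.filter_eq_empty_iff]
        intro k _
        rcases h1 : G1.prop x k with _ | d <;> simp [cFip, hx, hxS, h1]
      have hA : (Finset.univ.filter fun k => (cFdp G1 G2 h (x, k)).isSome = true).card
          = propsOn G1 x := by
        unfold propsOn
        rw [Finset.card_filter, Finset.card_filter]
        refine Finset.sum_congr rfl fun k _ => ?_
        rcases h1 : G1.prop x k with _ | d <;> simp [cFdp, hx, h1]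
      rw [hA, hB, hC]
      simp
    · have hpt : ∀ k : K,
          (if (cFdp G1 G2 h (x, k)).isSome = true then 1 else 0) +
          ((if (cFup G1 G2 h (x, k)).isSome = true then 1 else 0) +
           (if (cFip G1 G2 h (x, k)).isSome = true then 1 else 0)) =
          if G1.prop x k ≠ G2.prop y k then 1 else 0 := by
        intro k
        rcases h1 : G1.prop x k with _ | d1 <;> rcases h2 : G2.prop y k with _ | d2
        · simp [cFdp, cFup, cFip, hx, h1, h2, hxS]
        · simp [cFdp, cFup, cFip, hx, h1, h2, hxS]
        · simp [cFdp, cFup, cFip, hx, h1, h2, hxS]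
        · by_cases hd : d1 = d2 <;> simp [cFdp, cFup, cFip, hx, h1, h2, hxS, hd]
      have hmm : mismatchCount G1 G2 x y
          = ∑ k : K, if G1.prop x k ≠ G2.prop y k then 1 else 0 :=
        Finset.card_filter _ _
      rw [Finset.card_filter, Finset.card_filter, Finset.card_filter,
        ← Finset.sum_add_distrib, ← Finset.sum_add_distrib,
        Finset.sum_congr rfl (fun k _ => hpt k)]
      rw [show ((some y : Option ι).elim 0 fun y' => mismatchCount G1 G2 x y')
          = mismatchCount G1 G2 x y from rfl]
      rw [if_neg (by simp), Nat.add_zero, hmm]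
  have hpery : ∀ y ∈ G2.V ∪ G2.E,
      (Finset.univ.filter fun k => (cFip G1 G2 h (y, k)).isSome = true).card =
      if (∀ x' ∈ G1.V ∪ G1.E, h x' ≠ some y) then propsOn G2 y else 0 := by
    intro y hyT
    have hyS : y ∉ G1.V ∪ G1.E := Finset.disjoint_right.mp hdisj hyT
    by_cases hun : ∀ x' ∈ G1.V ∪ G1.E, h x' ≠ some y
    · have hcips : ∀ k : K, cFip G1 G2 h (y, k) = (G2.prop y k).map fun d => ((y, k), d) := by
        intro k
        unfold cFip
        rw [if_neg hyS, if_pos hun]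
      rw [if_pos hun]
      unfold propsOn
      rw [Finset.card_filter, Finset.card_filter]
      refine Finset.sum_congr rfl fun k _ => ?_
      rcases h2 : G2.prop y k with _ | d <;> simp [hcips k, h2]
    · have hcips : ∀ k : K, cFip G1 G2 h (y, k) = none := by
        intro k
        unfold cFip
        rw [if_neg hyS, if_neg hun]
      rw [if_neg hun]
      rw [Finset.card_eq_zero, Finset.filter_eq_empty_iff]
      intro k _
      simp [hcips k]
  have e_dp : (cdpL G1 G2 h).length
      = ∑ x ∈ G1.V ∪ G1.E,
          (Finset.univ.filter fun k => (cFdp G1 G2 h (x, k)).isSome = true).card := by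
    unfold cdpL
    rw [length_filterMap_eq (cFdp G1 G2 h) id (fun a b hb => cFdp_self G1 G2 h a b hb),
      length_toList_filter, card_filter_product]
  have e_up : (cupL G1 G2 h).length
      = ∑ x ∈ G1.V ∪ G1.E,
          (Finset.univ.filter fun k => (cFup G1 G2 h (x, k)).isSome = true).card := by
    unfold cupL
    rw [length_filterMap_eq (cFup G1 G2 h) Prod.fst (cFup_key G1 G2 h),
      length_toList_filter, card_filter_product]
  have e_ip : (cipL G1 G2 h).length
      = (∑ x ∈ G1.V ∪ G1.E,
          (Finset.univ.filter fun k => (cFip G1 G2 h (x, k)).isSome = true).card) +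
        ∑ y ∈ G2.V ∪ G2.E,
          (Finset.univ.filter fun k => (cFip G1 G2 h (y, k)).isSome = true).card := by
    unfold cipL
    rw [length_filterMap_eq (cFip G1 G2 h) Prod.fst (cFip_key G1 G2 h),
      length_toList_filter, card_filter_product, Finset.sum_union hdisj]
  have e_de : (cdeL G1 h).length = (cUE G1 h).card := by
    unfold cdeL; exact Finset.length_toList _
  have e_dv : (cdvL G1 h).length = (cUV G1 h).card := by
    unfold cdvL; exact Finset.length_toList _
  have e_iv : (civL G1 G2 h).length = (cRV G1 G2 h).card := by
    unfold civL
    rw [length_filterMap_eq (cFiv G2) Prod.fst (cFiv_key G2),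
      List.filter_eq_self.mpr ?_, Finset.length_toList]
    intro a ha
    have haRV := Finset.mem_toList.mp ha
    have hs : (G2.lab a).isSome :=
      (hG2.lab_dom a).mpr (Finset.mem_union_left _ ((hcRV a).mp haRV).1)
    obtain ⟨lb, hlb⟩ := Option.isSome_iff_exists.mp hs
    simp [cFiv, hlb]
  have e_ie : (cieL G1 G2 h).length = (cRE G1 G2 h).card := by
    unfold cieL
    rw [length_filterMap_eq (cFie G2 h) Prod.fst (cFie_key G2 h),
      List.filter_eq_self.mpr ?_, Finset.length_toList]
    intro a ha
    have haRE := Finset.mem_toList.mp ha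
    have hxE : a ∈ G2.E := ((hcRE a).mp haRE).1
    obtain ⟨a1, h1⟩ := Option.isSome_iff_exists.mp ((hG2.src_dom a).mpr hxE)
    obtain ⟨b1, h2⟩ := Option.isSome_iff_exists.mp ((hG2.tgt_dom a).mpr hxE)
    obtain ⟨lb, h3⟩ := Option.isSome_iff_exists.mp
      ((hG2.lab_dom a).mpr (Finset.mem_union_right _ hxE))
    simp [cFie, h1, h2, h3]
  have eUL : (unmatchedL G1 h).card = (cUV G1 h).card + (cUE G1 h).card := by
    unfold unmatchedL cUV cUE
    rw [Finset.filter_union,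
      Finset.card_union_of_disjoint (Finset.disjoint_filter_filter hG1.disj)]
  have eUR : (unmatchedR G1 G2 h).card = (cRV G1 G2 h).card + (cRE G1 G2 h).card := by
    unfold unmatchedR cRV cRE
    rw [Finset.filter_union,
      Finset.card_union_of_disjoint (Finset.disjoint_filter_filter hG2.disj)]
  have key1 : (∑ x ∈ G1.V ∪ G1.E,
        (Finset.univ.filter fun k => (cFdp G1 G2 h (x, k)).isSome = true).card) +
      ((∑ x ∈ G1.V ∪ G1.E,
        (Finset.univ.filter fun k => (cFup G1 G2 h (x, k)).isSome = true).card) +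
       (∑ x ∈ G1.V ∪ G1.E,
        (Finset.univ.filter fun k => (cFip G1 G2 h (x, k)).isSome = true).card)) =
      (∑ x ∈ G1.V ∪ G1.E, (h x).elim 0 fun y => mismatchCount G1 G2 x y) +
        ∑ x ∈ unmatchedL G1 h, propsOn G1 x := by
    rw [← Finset.sum_add_distrib, ← Finset.sum_add_distrib,
      Finset.sum_congr rfl hperx, Finset.sum_add_distrib]
    congr 1
    unfold unmatchedL
    rw [Finset.sum_filter]
  have key2 : (∑ y ∈ G2.V ∪ G2.E,
        (Finset.univ.filter fun k => (cFip G1 G2 h (y, k)).isSome = true).card) =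
      ∑ y ∈ unmatchedR G1 G2 h, propsOn G2 y := by
    rw [Finset.sum_congr rfl hpery]
    unfold unmatchedR
    rw [Finset.sum_filter]
  have hlen : OPS.length = pisoCost G1 G2 h := by
    rw [hOPSdef]
    simp only [List.length_append, List.length_map]
    rw [e_dp, e_de, e_dv, e_up, e_iv, e_ie, e_ip]
    unfold pisoCost
    rw [eUL, eUR]
    omega
  exact ⟨⟨OPS, hcan, hval, hiso, hlen⟩, Nat.sInf_le ⟨OPS, hval, hiso, hlen⟩⟩
end

section
/- If ops is a canonical edit script such that ops(G1) is isomorphic to G2, then there exists a partial isomorphism h between G1 and G2 with cost(h) ≤ |ops|. -/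
/-!
Property graphs, homomorphisms/isomorphisms/subgraphs, edit operations,
edit scripts, canonical scripts, graph edit distance, partial isomorphisms
and their cost, and the edit-script rewriting system of the paper
"Flexible graph matching and graph edit distance using answer set programming".
-/

universe u v w z

variable {ι : Type u} {L : Type v} {K : Type w} {D : Type z}

/-! ### Auxiliary lemmas for the proof -/

section AuxProof

variable [DecidableEq ι] [DecidableEq K]

private lemma card_le_of_subset_insert {A B : Finset ι} {a : ι} (h : A ⊆ insert a B) :
    A.card ≤ B.card + 1 :=
  (Finset.card_le_card h).trans (Finset.card_insert_le _ _)

private lemma sum_le_sum_add_one {S : Finset ι} {f g : ι → ℕ} (x0 : ι)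
    (h1 : ∀ x ∈ S, x ≠ x0 → f x ≤ g x) (h2 : f x0 ≤ g x0 + 1) :
    ∑ x ∈ S, f x ≤ (∑ x ∈ S, g x) + 1 := by
  by_cases hx : x0 ∈ S
  · rw [← Finset.add_sum_erase _ f hx, ← Finset.add_sum_erase _ g hx]
    have h3 := Finset.sum_le_sum (s := S.erase x0) (f := f) (g := g)
      (fun x hx' => h1 x (Finset.mem_of_mem_erase hx') (Finset.ne_of_mem_erase hx'))
    omega
  · exact le_trans
      (Finset.sum_le_sum (fun x hx' => h1 x hx' (by rintro rfl; exact hx hx')))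
      (Nat.le_succ _)

lemma isPGraph_applyOp {G : PreGraph ι L K D} {op : EditOp ι L K D}
    (hap : Applicable op G) (hG : IsPGraph G) : IsPGraph (applyOp op G) := by
  cases op with
  | insV v l =>
    simp only [Applicable, Finset.mem_union, not_or] at hap
    refine ⟨Finset.disjoint_insert_left.2 ⟨hap.2, hG.disj⟩, hG.src_dom, hG.tgt_dom,
      fun e u he => Finset.mem_insert_of_mem (hG.src_mem e u he),
      fun e u he => Finset.mem_insert_of_mem (hG.tgt_mem e u he), ?_, ?_⟩
    · intro x
      show (if x = v then some l else G.lab x).isSome ↔ x ∈ insert v G.V ∪ G.E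
      by_cases hx : x = v
      · simp [hx]
      · simpa [hx, Finset.mem_union, Finset.mem_insert] using hG.lab_dom x
    · intro x k hk
      have := hG.prop_dom x k hk
      show x ∈ insert v G.V ∪ G.E
      simp only [Finset.mem_union, Finset.mem_insert] at this ⊢
      tauto
  | insE e v w l =>
    obtain ⟨hv, hw, he⟩ := hap
    simp only [Finset.mem_union, not_or] at he
    constructor
    · exact Finset.disjoint_insert_right.2 ⟨he.1, hG.disj⟩
    · intro x
      show (if x = e then some v else G.src x).isSome ↔ x ∈ insert e G.E
      by_cases hx : x = e
      · simp [hx]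
      · simpa [hx, Finset.mem_insert] using hG.src_dom x
    · intro x
      show (if x = e then some w else G.tgt x).isSome ↔ x ∈ insert e G.E
      by_cases hx : x = e
      · simp [hx]
      · simpa [hx, Finset.mem_insert] using hG.tgt_dom x
    · intro x u hx
      show u ∈ G.V
      by_cases hxe : x = e
      · simp only [applyOp, hxe, if_pos rfl] at hx
        cases hx; exact hv
      · simp only [applyOp, if_neg hxe] at hx
        exact hG.src_mem x u hx
    · intro x u hx
      show u ∈ G.V
      by_cases hxe : x = e
      · simp only [applyOp, hxe, if_pos rfl] at hx
        cases hx; exact hw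
      · simp only [applyOp, if_neg hxe] at hx
        exact hG.tgt_mem x u hx
    · intro x
      show (if x = e then some l else G.lab x).isSome ↔ x ∈ G.V ∪ insert e G.E
      by_cases hx : x = e
      · simp [hx]
      · simpa [hx, Finset.mem_union, Finset.mem_insert] using hG.lab_dom x
    · intro x k hk
      have := hG.prop_dom x k hk
      show x ∈ G.V ∪ insert e G.E
      simp only [Finset.mem_union, Finset.mem_insert] at this ⊢
      tauto
  | insP x0 k0 d =>
    refine ⟨hG.disj, hG.src_dom, hG.tgt_dom, hG.src_mem, hG.tgt_mem, hG.lab_dom, ?_⟩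
    intro x k hk
    show x ∈ G.V ∪ G.E
    by_cases hx : x = x0 ∧ k = k0
    · exact hx.1 ▸ hap.1
    · simp only [applyOp, if_neg hx] at hk
      exact hG.prop_dom x k hk
  | delV v =>
    obtain ⟨hv, hinc, hpr⟩ := hap
    have hvE : v ∉ G.E := Finset.disjoint_left.1 hG.disj hv
    constructor
    · exact Finset.disjoint_of_subset_left (Finset.erase_subset _ _) hG.disj
    · exact hG.src_dom
    · exact hG.tgt_dom
    · intro e u he
      replace he : G.src e = some u := he
      show u ∈ G.V.erase v
      have heE : e ∈ G.E := (hG.src_dom e).1 (by rw [he]; rfl)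
      refine Finset.mem_erase.2 ⟨?_, hG.src_mem e u he⟩
      rintro rfl
      exact (hinc e heE).1 he
    · intro e u he
      replace he : G.tgt e = some u := he
      show u ∈ G.V.erase v
      have heE : e ∈ G.E := (hG.tgt_dom e).1 (by rw [he]; rfl)
      refine Finset.mem_erase.2 ⟨?_, hG.tgt_mem e u he⟩
      rintro rfl
      exact (hinc e heE).2 he
    · intro x
      show (if x = v then none else G.lab x).isSome ↔ x ∈ G.V.erase v ∪ G.E
      by_cases hx : x = v
      · subst hx
        simp [Finset.mem_union, Finset.notMem_erase, hvE]
      · simpa [hx, Finset.mem_union, Finset.mem_erase] using hG.lab_dom x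
    · intro x k hk
      replace hk : (G.prop x k).isSome := hk
      have hx := hG.prop_dom x k hk
      show x ∈ G.V.erase v ∪ G.E
      simp only [Finset.mem_union, Finset.mem_erase] at hx ⊢
      rcases hx with hx | hx
      · left
        refine ⟨?_, hx⟩
        rintro rfl
        rw [hpr k] at hk
        cases hk
      · right; exact hx
  | delE e =>
    obtain ⟨he, hpr⟩ := hap
    have heV : e ∉ G.V := fun h => Finset.disjoint_left.1 hG.disj h he
    constructor
    · exact Finset.disjoint_of_subset_right (Finset.erase_subset _ _) hG.disj
    · intro x
      show (if x = e then none else G.src x).isSome ↔ x ∈ G.E.erase e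
      by_cases hx : x = e
      · simp [hx]
      · simpa [hx, Finset.mem_erase] using hG.src_dom x
    · intro x
      show (if x = e then none else G.tgt x).isSome ↔ x ∈ G.E.erase e
      by_cases hx : x = e
      · simp [hx]
      · simpa [hx, Finset.mem_erase] using hG.tgt_dom x
    · intro x u hx
      show u ∈ G.V
      by_cases hxe : x = e
      · simp only [applyOp, hxe, if_pos rfl] at hx; cases hx
      · simp only [applyOp, if_neg hxe] at hx
        exact hG.src_mem x u hx
    · intro x u hx
      show u ∈ G.V
      by_cases hxe : x = e
      · simp only [applyOp, hxe, if_pos rfl] at hx; cases hx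
      · simp only [applyOp, if_neg hxe] at hx
        exact hG.tgt_mem x u hx
    · intro x
      show (if x = e then none else G.lab x).isSome ↔ x ∈ G.V ∪ G.E.erase e
      by_cases hx : x = e
      · subst hx
        simp [Finset.mem_union, Finset.notMem_erase, heV]
      · simpa [hx, Finset.mem_union, Finset.mem_erase] using hG.lab_dom x
    · intro x k hk
      replace hk : (G.prop x k).isSome := hk
      have hx := hG.prop_dom x k hk
      show x ∈ G.V ∪ G.E.erase e
      simp only [Finset.mem_union, Finset.mem_erase] at hx ⊢
      rcases hx with hx | hx
      · left; exact hx
      · right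
        refine ⟨?_, hx⟩
        rintro rfl
        rw [hpr k] at hk
        cases hk
  | delP x0 k0 =>
    refine ⟨hG.disj, hG.src_dom, hG.tgt_dom, hG.src_mem, hG.tgt_mem, hG.lab_dom, ?_⟩
    intro x k hk
    show x ∈ G.V ∪ G.E
    by_cases hx : x = x0 ∧ k = k0
    · simp only [applyOp, if_pos hx] at hk; cases hk
    · simp only [applyOp, if_neg hx] at hk
      exact hG.prop_dom x k hk
  | updP x0 k0 d =>
    refine ⟨hG.disj, hG.src_dom, hG.tgt_dom, hG.src_mem, hG.tgt_mem, hG.lab_dom, ?_⟩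
    intro x k hk
    show x ∈ G.V ∪ G.E
    by_cases hx : x = x0 ∧ k = k0
    · exact hx.1 ▸ hG.prop_dom x0 k0 hap
    · simp only [applyOp, if_neg hx] at hk
      exact hG.prop_dom x k hk


section CostLemmas

variable [DecidableEq D] [Fintype K]

lemma iso_gives_piso {G G2 : PreGraph ι L K D} (hG : IsPGraph G) {f : ι → ι}
    (hf : IsIso G G2 f) :
    ∃ h : ι → Option ι, IsPartialIso G G2 h ∧ pisoCost G G2 h = 0 := by
  obtain ⟨hfh, g, hgh, hgf, hfg⟩ := hf
  set h : ι → Option ι := fun x => if x ∈ G.V ∪ G.E then some (f x) else none with hh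
  have hsome : ∀ x ∈ G.V ∪ G.E, h x = some (f x) := fun x hx => if_pos hx
  have hdomh : ∀ x y, h x = some y → x ∈ G.V ∪ G.E ∧ y = f x := by
    intro x y hxy
    by_cases hx : x ∈ G.V ∪ G.E
    · rw [hsome x hx] at hxy
      exact ⟨hx, (Option.some.inj hxy).symm⟩
    · simp only [hh] at hxy
      rw [if_neg hx] at hxy
      cases hxy
  refine ⟨h, ⟨?_, ?_, ?_, ?_, ?_⟩, ?_⟩
  · intro x y hxy
    obtain ⟨hx, rfl⟩ := hdomh x y hxy
    rcases Finset.mem_union.1 hx with hx' | hx'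
    · exact Or.inl ⟨hx', hfh.map_V x hx'⟩
    · exact Or.inr ⟨hx', hfh.map_E x hx'⟩
  · intro x x' y hx hx'
    obtain ⟨h1, rfl⟩ := hdomh x y hx
    obtain ⟨h2, he⟩ := hdomh x' _ hx'
    calc x = g (f x) := (hgf x h1).symm
      _ = g (f x') := by rw [← he]
      _ = x' := hgf x' h2
  · intro x y hxy
    obtain ⟨hx, rfl⟩ := hdomh x y hxy
    exact hfh.lab_eq x hx
  · intro e e' v he hsrc
    obtain ⟨heDom, rfl⟩ := hdomh e e' he
    have heE : e ∈ G.E := (hG.src_dom e).1 (by rw [hsrc]; rfl)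
    have hvV : v ∈ G.V := hG.src_mem e v hsrc
    rw [hfh.src_eq e heE v hsrc]
    exact hsome v (Finset.mem_union_left _ hvV)
  · intro e e' v he htgt
    obtain ⟨heDom, rfl⟩ := hdomh e e' he
    have heE : e ∈ G.E := (hG.tgt_dom e).1 (by rw [htgt]; rfl)
    have hvV : v ∈ G.V := hG.tgt_mem e v htgt
    rw [hfh.tgt_eq e heE v htgt]
    exact hsome v (Finset.mem_union_left _ hvV)
  · have hL : unmatchedL G h = ∅ := by
      simp only [unmatchedL]
      rw [Finset.filter_eq_empty_iff]
      intro x hx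
      rw [hsome x hx]
      simp
    have hR : unmatchedR G G2 h = ∅ := by
      simp only [unmatchedR]
      rw [Finset.filter_eq_empty_iff]
      intro y hy hall
      have hgy : g y ∈ G.V ∪ G.E := by
        rcases Finset.mem_union.1 hy with hy' | hy'
        · exact Finset.mem_union_left _ (hgh.map_V y hy')
        · exact Finset.mem_union_right _ (hgh.map_E y hy')
      exact hall (g y) hgy (by rw [hsome _ hgy, hfg y hy])
    have hmm : ∀ x ∈ G.V ∪ G.E, (h x).elim 0 (fun y => mismatchCount G G2 x y) = 0 := by
      intro x hx
      rw [hsome x hx]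
      show mismatchCount G G2 x (f x) = 0
      rw [mismatchCount, Finset.card_eq_zero, Finset.filter_eq_empty_iff]
      intro k _
      simp only [ne_eq, not_not]
      cases hpx : G.prop x k with
      | some d => exact (hfh.prop_eq x hx k d hpx).symm
      | none =>
        cases hpy : G2.prop (f x) k with
        | none => rfl
        | some d =>
          have hfx : f x ∈ G2.V ∪ G2.E := by
            rcases Finset.mem_union.1 hx with hx' | hx'
            · exact Finset.mem_union_left _ (hfh.map_V x hx')
            · exact Finset.mem_union_right _ (hfh.map_E x hx')
          have hb := hgh.prop_eq (f x) hfx k d hpy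
          rw [hgf x hx, hpx] at hb
          cases hb
    simp only [pisoCost, hL, hR, Finset.card_empty, Finset.sum_empty,
      Finset.sum_eq_zero hmm, add_zero, zero_add]

private lemma card_le_of_subset_insert' {α : Type*} [DecidableEq α]
    {A B : Finset α} {a : α} (h : A ⊆ insert a B) : A.card ≤ B.card + 1 :=
  (Finset.card_le_card h).trans (Finset.card_insert_le _ _)

lemma cost_prop_tweak {G G2 : PreGraph ι L K D}
    (h' : ι → Option ι) {p : ι → K → Option D} (x0 : ι) (k0 : K)
    (hp : ∀ x k, ¬(x = x0 ∧ k = k0) → p x k = G.prop x k) :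
    pisoCost G G2 h' ≤ pisoCost { G with prop := p } G2 h' + 1 := by
  set G' : PreGraph ι L K D := { G with prop := p } with hG'
  have hp' : ∀ x k, ¬(x = x0 ∧ k = k0) → G'.prop x k = G.prop x k := hp
  have hmc_ne : ∀ x, x ≠ x0 → ∀ y, mismatchCount G G2 x y = mismatchCount G' G2 x y := by
    intro x hx y
    simp only [mismatchCount]
    congr 1
    apply Finset.filter_congr
    intro k _
    rw [hp' x k (fun hc => hx hc.1)]
  have hmc_le : ∀ y, mismatchCount G G2 x0 y ≤ mismatchCount G' G2 x0 y + 1 := by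
    intro y
    simp only [mismatchCount]
    apply card_le_of_subset_insert' (a := k0)
    intro k hk
    rcases eq_or_ne k k0 with rfl | hne
    · exact Finset.mem_insert_self _ _
    · refine Finset.mem_insert_of_mem (Finset.mem_filter.2 ⟨Finset.mem_univ _, ?_⟩)
      rw [hp' x0 k (fun hc => hne hc.2)]
      exact (Finset.mem_filter.1 hk).2
  have hpo_ne : ∀ x, x ≠ x0 → propsOn G x = propsOn G' x := by
    intro x hx
    simp only [propsOn]
    congr 1
    apply Finset.filter_congr
    intro k _
    rw [hp' x k (fun hc => hx hc.1)]
  have hpo_le : propsOn G x0 ≤ propsOn G' x0 + 1 := by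
    simp only [propsOn]
    apply card_le_of_subset_insert' (a := k0)
    intro k hk
    rcases eq_or_ne k k0 with rfl | hne
    · exact Finset.mem_insert_self _ _
    · refine Finset.mem_insert_of_mem (Finset.mem_filter.2 ⟨Finset.mem_univ _, ?_⟩)
      rw [hp' x0 k (fun hc => hne hc.2)]
      exact (Finset.mem_filter.1 hk).2
  have hL : unmatchedL G h' = unmatchedL G' h' := rfl
  have hR : unmatchedR G G2 h' = unmatchedR G' G2 h' := rfl
  have hdom : G.V ∪ G.E = G'.V ∪ G'.E := rfl
  have c1 : (unmatchedL G h').card = (unmatchedL G' h').card := by rw [hL]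
  have c2 : (unmatchedR G G2 h').card = (unmatchedR G' G2 h').card := by rw [hR]
  have c5 : (∑ y ∈ unmatchedR G G2 h', propsOn G2 y)
      = ∑ y ∈ unmatchedR G' G2 h', propsOn G2 y := by rw [hR]
  by_cases hx0 : h' x0 = none
  · have c3 : (∑ x ∈ G.V ∪ G.E, (h' x).elim 0 fun y => mismatchCount G G2 x y)
        = ∑ x ∈ G.V ∪ G.E, (h' x).elim 0 fun y => mismatchCount G' G2 x y := by
      apply Finset.sum_congr rfl
      intro x _
      rcases eq_or_ne x x0 with rfl | hne
      · rw [hx0]; rfl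
      · cases hhx : h' x with
        | none => rfl
        | some y => exact hmc_ne x hne y
    have c4 : (∑ x ∈ unmatchedL G h', propsOn G x)
        ≤ (∑ x ∈ unmatchedL G' h', propsOn G' x) + 1 := by
      rw [← hL]
      exact sum_le_sum_add_one x0 (fun x _ hx => le_of_eq (hpo_ne x hx)) hpo_le
    simp only [pisoCost]
    rw [← hdom]
    omega
  · have c3 : (∑ x ∈ G.V ∪ G.E, (h' x).elim 0 fun y => mismatchCount G G2 x y)
        ≤ (∑ x ∈ G.V ∪ G.E, (h' x).elim 0 fun y => mismatchCount G' G2 x y) + 1 := by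
      apply sum_le_sum_add_one x0
      · intro x _ hne
        cases hhx : h' x with
        | none => exact le_refl 0
        | some y => exact le_of_eq (hmc_ne x hne y)
      · obtain ⟨y0, hy0⟩ := Option.ne_none_iff_exists'.1 hx0
        rw [hy0]
        exact hmc_le y0
    have c4 : (∑ x ∈ unmatchedL G h', propsOn G x)
        = ∑ x ∈ unmatchedL G' h', propsOn G' x := by
      rw [← hL]
      apply Finset.sum_congr rfl
      intro x hx
      have hxn : h' x = none := (Finset.mem_filter.1 hx).2
      exact hpo_ne x (fun hc => hx0 (hc ▸ hxn))
    simp only [pisoCost]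
    rw [← hdom]
    omega

lemma cost_insert {G G' G2 : PreGraph ι L K D} (h' : ι → Option ι) (z : ι)
    (hdom : G'.V ∪ G'.E = insert z (G.V ∪ G.E)) (hz : z ∉ G.V ∪ G.E)
    (hprop : G'.prop = G.prop) (hzprop : ∀ k, G.prop z k = none) :
    pisoCost G G2 (fun x => if x = z then none else h' x) ≤ pisoCost G' G2 h' + 1 := by
  set h : ι → Option ι := fun x => if x = z then none else h' x with hh
  have hhx : ∀ x ∈ G.V ∪ G.E, h x = h' x := by
    intro x hx
    refine if_neg ?_
    rintro rfl
    exact hz hx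
  have hmc : ∀ x y, mismatchCount G' G2 x y = mismatchCount G G2 x y := by
    intro x y
    simp only [mismatchCount, hprop]
  have hpo : ∀ x, propsOn G' x = propsOn G x := by
    intro x
    simp only [propsOn, hprop]
  have c1 : unmatchedL G h ⊆ unmatchedL G' h' := by
    intro x hx
    simp only [unmatchedL, Finset.mem_filter] at hx ⊢
    refine ⟨hdom ▸ Finset.mem_insert_of_mem hx.1, ?_⟩
    rw [← hhx x hx.1]
    exact hx.2
  have c3 : (∑ x ∈ G'.V ∪ G'.E, (h' x).elim 0 fun y => mismatchCount G' G2 x y)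
      = ((h' z).elim 0 fun y => mismatchCount G' G2 z y)
        + ∑ x ∈ G.V ∪ G.E, (h x).elim 0 fun y => mismatchCount G G2 x y := by
    rw [hdom, Finset.sum_insert hz]
    congr 1
    apply Finset.sum_congr rfl
    intro x hx
    rw [hhx x hx]
    cases h' x with
    | none => rfl
    | some y => exact hmc x y
  have c4 : (∑ x ∈ unmatchedL G h, propsOn G x) ≤ ∑ x ∈ unmatchedL G' h', propsOn G' x := by
    refine le_trans (Finset.sum_le_sum_of_subset c1) (le_of_eq ?_)
    exact Finset.sum_congr rfl fun x _ => (hpo x).symm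
  have c1c : (unmatchedL G h).card ≤ (unmatchedL G' h').card := Finset.card_le_card c1
  cases hz' : h' z with
  | none =>
    have c2 : unmatchedR G G2 h ⊆ unmatchedR G' G2 h' := by
      intro y hy
      simp only [unmatchedR, Finset.mem_filter] at hy ⊢
      refine ⟨hy.1, ?_⟩
      intro x hx
      rw [hdom] at hx
      rcases Finset.mem_insert.1 hx with rfl | hx
      · rw [hz']
        simp
      · rw [← hhx x hx]
        exact hy.2 x hx
    have c5 : (∑ y ∈ unmatchedR G G2 h, propsOn G2 y)
        ≤ ∑ y ∈ unmatchedR G' G2 h', propsOn G2 y := Finset.sum_le_sum_of_subset c2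
    have c2c : (unmatchedR G G2 h).card ≤ (unmatchedR G' G2 h').card := Finset.card_le_card c2
    rw [hz'] at c3
    simp only [Option.elim_none, zero_add] at c3
    simp only [pisoCost]
    omega
  | some y0 =>
    have hy0 : y0 ∉ unmatchedR G' G2 h' := by
      intro hmem
      exact (Finset.mem_filter.1 hmem).2 z (hdom ▸ Finset.mem_insert_self z _) hz'
    have c2 : unmatchedR G G2 h ⊆ insert y0 (unmatchedR G' G2 h') := by
      intro y hy
      simp only [unmatchedR, Finset.mem_filter] at hy
      rcases eq_or_ne y y0 with rfl | hne
      · exact Finset.mem_insert_self _ _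
      · refine Finset.mem_insert_of_mem ?_
        simp only [unmatchedR, Finset.mem_filter]
        refine ⟨hy.1, ?_⟩
        intro x hx
        rw [hdom] at hx
        rcases Finset.mem_insert.1 hx with rfl | hx
        · rw [hz']
          exact fun hc => hne (Option.some.inj hc).symm
        · rw [← hhx x hx]
          exact hy.2 x hx
    have c2c : (unmatchedR G G2 h).card ≤ (unmatchedR G' G2 h').card + 1 :=
      card_le_of_subset_insert' c2
    have hkey : propsOn G2 y0 = mismatchCount G' G2 z y0 := by
      rw [hmc z y0]
      simp only [propsOn, mismatchCount]
      congr 1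
      apply Finset.filter_congr
      intro k _
      rw [hzprop k]
      cases G2.prop y0 k <;> simp
    have c5 : (∑ y ∈ unmatchedR G G2 h, propsOn G2 y)
        ≤ mismatchCount G' G2 z y0 + ∑ y ∈ unmatchedR G' G2 h', propsOn G2 y := by
      refine le_trans (Finset.sum_le_sum_of_subset c2) (le_of_eq ?_)
      rw [Finset.sum_insert hy0, hkey]
    rw [hz'] at c3
    simp only [Option.elim_some] at c3
    simp only [pisoCost]
    omega

lemma cost_erase {G G' G2 : PreGraph ι L K D} (h' : ι → Option ι) (z : ι)
    (hdom : G'.V ∪ G'.E = (G.V ∪ G.E).erase z) (hz : z ∈ G.V ∪ G.E)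
    (hprop : G'.prop = G.prop) (hzprop : propsOn G z = 0) (hz' : h' z = none) :
    pisoCost G G2 h' ≤ pisoCost G' G2 h' + 1 := by
  have hmc : ∀ x y, mismatchCount G' G2 x y = mismatchCount G G2 x y := by
    intro x y
    simp only [mismatchCount, hprop]
  have hpo : ∀ x, propsOn G' x = propsOn G x := by
    intro x
    simp only [propsOn, hprop]
  have hsub : G'.V ∪ G'.E ⊆ G.V ∪ G.E := hdom ▸ Finset.erase_subset _ _
  have hzdom : z ∉ G'.V ∪ G'.E := hdom ▸ Finset.notMem_erase _ _
  have c1 : unmatchedL G h' ⊆ insert z (unmatchedL G' h') := by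
    intro x hx
    simp only [unmatchedL, Finset.mem_filter] at hx
    rcases eq_or_ne x z with rfl | hne
    · exact Finset.mem_insert_self _ _
    · refine Finset.mem_insert_of_mem ?_
      simp only [unmatchedL, Finset.mem_filter]
      exact ⟨hdom ▸ Finset.mem_erase.2 ⟨hne, hx.1⟩, hx.2⟩
  have hzL : z ∉ unmatchedL G' h' := fun hmem => hzdom (Finset.mem_filter.1 hmem).1
  have c1c : (unmatchedL G h').card ≤ (unmatchedL G' h').card + 1 :=
    card_le_of_subset_insert' c1
  have c2 : unmatchedR G G2 h' ⊆ unmatchedR G' G2 h' := by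
    intro y hy
    simp only [unmatchedR, Finset.mem_filter] at hy ⊢
    exact ⟨hy.1, fun x hx => hy.2 x (hsub hx)⟩
  have c2c : (unmatchedR G G2 h').card ≤ (unmatchedR G' G2 h').card := Finset.card_le_card c2
  have c3 : (∑ x ∈ G.V ∪ G.E, (h' x).elim 0 fun y => mismatchCount G G2 x y)
      = ∑ x ∈ G'.V ∪ G'.E, (h' x).elim 0 fun y => mismatchCount G' G2 x y := by
    rw [← Finset.add_sum_erase _ _ hz, hz', ← hdom]
    simp only [Option.elim_none, zero_add]
    apply Finset.sum_congr rfl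
    intro x _
    cases h' x with
    | none => rfl
    | some y => exact (hmc x y).symm
  have c4 : (∑ x ∈ unmatchedL G h', propsOn G x) ≤ ∑ x ∈ unmatchedL G' h', propsOn G' x := by
    calc (∑ x ∈ unmatchedL G h', propsOn G x)
        ≤ ∑ x ∈ insert z (unmatchedL G' h'), propsOn G x := Finset.sum_le_sum_of_subset c1
      _ = propsOn G z + ∑ x ∈ unmatchedL G' h', propsOn G x := Finset.sum_insert hzL
      _ = ∑ x ∈ unmatchedL G' h', propsOn G' x := by
          rw [hzprop, zero_add]
          exact Finset.sum_congr rfl fun x _ => (hpo x).symm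
  have c5 : (∑ y ∈ unmatchedR G G2 h', propsOn G2 y)
      ≤ ∑ y ∈ unmatchedR G' G2 h', propsOn G2 y := Finset.sum_le_sum_of_subset c2
  simp only [pisoCost]
  omega

lemma step_piso {G G2 : PreGraph ι L K D} {op : EditOp ι L K D}
    (hG : IsPGraph G) (hap : Applicable op G) {h' : ι → Option ι}
    (hp : IsPartialIso (applyOp op G) G2 h') :
    ∃ h : ι → Option ι, IsPartialIso G G2 h ∧
      pisoCost G G2 h ≤ pisoCost (applyOp op G) G2 h' + 1 := by
  obtain ⟨pdom, pinj, plab, psrc, ptgt⟩ := hp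
  cases op with
  | delP x0 k0 =>
    exact ⟨h', ⟨pdom, pinj, plab, psrc, ptgt⟩, cost_prop_tweak h' x0 k0 (fun x k hk => if_neg hk)⟩
  | updP x0 k0 d =>
    exact ⟨h', ⟨pdom, pinj, plab, psrc, ptgt⟩, cost_prop_tweak h' x0 k0 (fun x k hk => if_neg hk)⟩
  | insP x0 k0 d =>
    exact ⟨h', ⟨pdom, pinj, plab, psrc, ptgt⟩, cost_prop_tweak h' x0 k0 (fun x k hk => if_neg hk)⟩
  | delV v0 =>
    obtain ⟨hv0, hinc, hpr⟩ := hap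
    have hz' : h' v0 = none := by
      cases hh0 : h' v0 with
      | none => rfl
      | some y =>
        rcases pdom v0 y hh0 with ⟨h1, _⟩ | ⟨h1, _⟩
        · exact absurd (show v0 ∈ G.V.erase v0 from h1) (Finset.notMem_erase _ _)
        · exact absurd (show v0 ∈ G.E from h1) (Finset.disjoint_left.1 hG.disj hv0)
    refine ⟨h', ⟨?_, pinj, ?_, fun e e' v he hsrc => psrc e e' v he hsrc,
      fun e e' v he htgt => ptgt e e' v he htgt⟩, ?_⟩
    · intro x y hxy
      rcases pdom x y hxy with ⟨h1, h2⟩ | ⟨h1, h2⟩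
      · exact Or.inl ⟨Finset.mem_of_mem_erase (show x ∈ G.V.erase v0 from h1), h2⟩
      · exact Or.inr ⟨h1, h2⟩
    · intro x y hxy
      have hne : x ≠ v0 := by rintro rfl; rw [hz'] at hxy; cases hxy
      have hl := plab x y hxy
      rwa [show (applyOp (EditOp.delV v0) G).lab x = (if x = v0 then none else G.lab x)
        from rfl, if_neg hne] at hl
    · refine cost_erase h' v0 ?_ (Finset.mem_union_left _ hv0) rfl ?_ hz'
      · show G.V.erase v0 ∪ G.E = (G.V ∪ G.E).erase v0
        rw [Finset.erase_union_distrib,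
          Finset.erase_eq_of_notMem (Finset.disjoint_left.1 hG.disj hv0)]
      · show propsOn G v0 = 0
        simp [propsOn, hpr]
  | delE e0 =>
    obtain ⟨he0, hpr⟩ := hap
    have heV : e0 ∉ G.V := fun hc => Finset.disjoint_left.1 hG.disj hc he0
    have hz' : h' e0 = none := by
      cases hh0 : h' e0 with
      | none => rfl
      | some y =>
        rcases pdom e0 y hh0 with ⟨h1, _⟩ | ⟨h1, _⟩
        · exact absurd (show e0 ∈ G.V from h1) heV
        · exact absurd (show e0 ∈ G.E.erase e0 from h1) (Finset.notMem_erase _ _)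
    refine ⟨h', ⟨?_, pinj, ?_, ?_, ?_⟩, ?_⟩
    · intro x y hxy
      rcases pdom x y hxy with ⟨h1, h2⟩ | ⟨h1, h2⟩
      · exact Or.inl ⟨h1, h2⟩
      · exact Or.inr ⟨Finset.mem_of_mem_erase (show x ∈ G.E.erase e0 from h1), h2⟩
    · intro x y hxy
      have hne : x ≠ e0 := by rintro rfl; rw [hz'] at hxy; cases hxy
      have hl := plab x y hxy
      rwa [show (applyOp (EditOp.delE e0) G).lab x = (if x = e0 then none else G.lab x)
        from rfl, if_neg hne] at hl
    · intro e e' v he hsrc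
      have hne : e ≠ e0 := by rintro rfl; rw [hz'] at he; cases he
      exact psrc e e' v he (by
        show (if e = e0 then none else G.src e) = some v
        rw [if_neg hne]; exact hsrc)
    · intro e e' v he htgt
      have hne : e ≠ e0 := by rintro rfl; rw [hz'] at he; cases he
      exact ptgt e e' v he (by
        show (if e = e0 then none else G.tgt e) = some v
        rw [if_neg hne]; exact htgt)
    · refine cost_erase h' e0 ?_ (Finset.mem_union_right _ he0) rfl ?_ hz'
      · show G.V ∪ G.E.erase e0 = (G.V ∪ G.E).erase e0
        rw [Finset.erase_union_distrib, Finset.erase_eq_of_notMem heV]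
      · show propsOn G e0 = 0
        simp [propsOn, hpr]
  | insV v0 l0 =>
    have hv0 : v0 ∉ G.V ∪ G.E := hap
    refine ⟨fun x => if x = v0 then none else h' x, ⟨?_, ?_, ?_, ?_, ?_⟩, ?_⟩
    · intro x y hxy
      replace hxy : (if x = v0 then none else h' x) = some y := hxy
      by_cases hne : x = v0
      · rw [if_pos hne] at hxy; cases hxy
      · rw [if_neg hne] at hxy
        rcases pdom x y hxy with ⟨h1, h2⟩ | ⟨h1, h2⟩
        · exact Or.inl ⟨(Finset.mem_insert.1 (show x ∈ insert v0 G.V from h1)).resolve_left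
            hne, h2⟩
        · exact Or.inr ⟨h1, h2⟩
    · intro x x' y hx hx'
      replace hx : (if x = v0 then none else h' x) = some y := hx
      replace hx' : (if x' = v0 then none else h' x') = some y := hx'
      by_cases h1 : x = v0
      · rw [if_pos h1] at hx; cases hx
      · by_cases h2 : x' = v0
        · rw [if_pos h2] at hx'; cases hx'
        · rw [if_neg h1] at hx
          rw [if_neg h2] at hx'
          exact pinj x x' y hx hx'
    · intro x y hxy
      replace hxy : (if x = v0 then none else h' x) = some y := hxy
      by_cases hne : x = v0
      · rw [if_pos hne] at hxy; cases hxy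
      · rw [if_neg hne] at hxy
        have hl := plab x y hxy
        rwa [show (applyOp (EditOp.insV v0 l0) G).lab x = (if x = v0 then some l0 else G.lab x)
          from rfl, if_neg hne] at hl
    · intro e e' v he hsrc
      replace he : (if e = v0 then none else h' e) = some e' := he
      by_cases hne : e = v0
      · rw [if_pos hne] at he; cases he
      · rw [if_neg hne] at he
        have hres := psrc e e' v he hsrc
        have hvV : v ∈ G.V := hG.src_mem e v hsrc
        have hvne : v ≠ v0 := by rintro rfl; exact hv0 (Finset.mem_union_left _ hvV)
        show (if v = v0 then none else h' v) = G2.src e'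
        rw [if_neg hvne]; exact hres
    · intro e e' v he htgt
      replace he : (if e = v0 then none else h' e) = some e' := he
      by_cases hne : e = v0
      · rw [if_pos hne] at he; cases he
      · rw [if_neg hne] at he
        have hres := ptgt e e' v he htgt
        have hvV : v ∈ G.V := hG.tgt_mem e v htgt
        have hvne : v ≠ v0 := by rintro rfl; exact hv0 (Finset.mem_union_left _ hvV)
        show (if v = v0 then none else h' v) = G2.tgt e'
        rw [if_neg hvne]; exact hres
    · refine cost_insert h' v0 ?_ hv0 rfl ?_
      · show insert v0 G.V ∪ G.E = insert v0 (G.V ∪ G.E)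
        exact Finset.insert_union _ _ _
      · intro k
        cases hk : G.prop v0 k with
        | none => rfl
        | some d => exact absurd (hG.prop_dom v0 k (by rw [hk]; rfl)) hv0
  | insE e0 v w l0 =>
    obtain ⟨hvV0, hwV0, he0⟩ := hap
    refine ⟨fun x => if x = e0 then none else h' x, ⟨?_, ?_, ?_, ?_, ?_⟩, ?_⟩
    · intro x y hxy
      replace hxy : (if x = e0 then none else h' x) = some y := hxy
      by_cases hne : x = e0
      · rw [if_pos hne] at hxy; cases hxy
      · rw [if_neg hne] at hxy
        rcases pdom x y hxy with ⟨h1, h2⟩ | ⟨h1, h2⟩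
        · exact Or.inl ⟨h1, h2⟩
        · exact Or.inr ⟨(Finset.mem_insert.1 (show x ∈ insert e0 G.E from h1)).resolve_left
            hne, h2⟩
    · intro x x' y hx hx'
      replace hx : (if x = e0 then none else h' x) = some y := hx
      replace hx' : (if x' = e0 then none else h' x') = some y := hx'
      by_cases h1 : x = e0
      · rw [if_pos h1] at hx; cases hx
      · by_cases h2 : x' = e0
        · rw [if_pos h2] at hx'; cases hx'
        · rw [if_neg h1] at hx
          rw [if_neg h2] at hx'
          exact pinj x x' y hx hx'
    · intro x y hxy
      replace hxy : (if x = e0 then none else h' x) = some y := hxy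
      by_cases hne : x = e0
      · rw [if_pos hne] at hxy; cases hxy
      · rw [if_neg hne] at hxy
        have hl := plab x y hxy
        rwa [show (applyOp (EditOp.insE e0 v w l0) G).lab x
          = (if x = e0 then some l0 else G.lab x) from rfl, if_neg hne] at hl
    · intro e e' v' he hsrc
      replace he : (if e = e0 then none else h' e) = some e' := he
      by_cases hne : e = e0
      · rw [if_pos hne] at he; cases he
      · rw [if_neg hne] at he
        have hres := psrc e e' v' he (by
          show (if e = e0 then some v else G.src e) = some v'
          rw [if_neg hne]; exact hsrc)
        have hvV : v' ∈ G.V := hG.src_mem e v' hsrc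
        have hvne : v' ≠ e0 := by rintro rfl; exact he0 (Finset.mem_union_left _ hvV)
        show (if v' = e0 then none else h' v') = G2.src e'
        rw [if_neg hvne]; exact hres
    · intro e e' v' he htgt
      replace he : (if e = e0 then none else h' e) = some e' := he
      by_cases hne : e = e0
      · rw [if_pos hne] at he; cases he
      · rw [if_neg hne] at he
        have hres := ptgt e e' v' he (by
          show (if e = e0 then some w else G.tgt e) = some v'
          rw [if_neg hne]; exact htgt)
        have hvV : v' ∈ G.V := hG.tgt_mem e v' htgt
        have hvne : v' ≠ e0 := by rintro rfl; exact he0 (Finset.mem_union_left _ hvV)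
        show (if v' = e0 then none else h' v') = G2.tgt e'
        rw [if_neg hvne]; exact hres
    · refine cost_insert h' e0 ?_ he0 rfl ?_
      · show G.V ∪ insert e0 G.E = insert e0 (G.V ∪ G.E)
        exact Finset.union_insert _ _ _
      · intro k
        cases hk : G.prop e0 k with
        | none => rfl
        | some d => exact absurd (hG.prop_dom e0 k (by rw [hk]; rfl)) he0

lemma script_gives_piso (G2 : PreGraph ι L K D) :
    ∀ (ops : List (EditOp ι L K D)) (G : PreGraph ι L K D), ValidScript G ops → IsPGraph G →
      (∃ f : ι → ι, IsIso (applyScript ops G) G2 f) →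
      ∃ h : ι → Option ι, IsPartialIso G G2 h ∧ pisoCost G G2 h ≤ ops.length := by
  intro ops
  induction ops with
  | nil =>
    intro G _ hG hiso
    obtain ⟨f, hf⟩ := hiso
    obtain ⟨h, h1, h2⟩ := iso_gives_piso hG (show IsIso G G2 f from hf)
    exact ⟨h, h1, by simp [h2]⟩
  | cons op ops ih =>
    intro G hvalid hG hiso
    cases hvalid with
    | cons hap hrest =>
      obtain ⟨h', hph', hc⟩ := ih (applyOp op G) hrest (isPGraph_applyOp hap hG)
        (show ∃ f, IsIso (applyScript ops (applyOp op G)) G2 f from hiso)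
      obtain ⟨h, hph, hch⟩ := step_piso hG hap hph'
      refine ⟨h, hph, ?_⟩
      simp only [List.length_cons]
      omega

end CostLemmas

end AuxProof

/-- from a canonical edit script taking `G1` to a graph
isomorphic to `G2` one can extract a partial isomorphism between `G1` and `G2`
whose cost is at most the length of the script. -/
theorem canonical_script_gives_piso
    [DecidableEq ι] [DecidableEq K] [DecidableEq D] [Fintype K]
    (G1 G2 : PreGraph ι L K D) (hG1 : IsPGraph G1) (hG2 : IsPGraph G2)
    (ops : List (EditOp ι L K D)) (hcan : Canonical ops)
    (hvalid : ValidScript G1 ops)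
    (hiso : ∃ f : ι → ι, IsIso (applyScript ops G1) G2 f) :
    ∃ h : ι → Option ι, IsPartialIso G1 G2 h ∧ pisoCost G1 G2 h ≤ ops.length :=
  script_gives_piso G2 ops G1 hvalid hG1 hiso
end
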